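/- arXiv:2408.11644 — 4 statements merged into one kernel-verified Lean document; each statement's English description precedes it below -/
import Mathlib

section
/- Let G be a (K_{p_1} ∪ ... ∪ K_{p_t})-saturated graph of order n > 3(p_1-2) + Σ_{i=2}^t p_i(p_i+1) with e(G) ≤ e(H(n; p_1,...,p_t)), let v be a minimum-degree vertex with neighborhood S, and let w ∉ S ∪ {v}. Then the graph G restricted to V(G) \ (S ∪ {v, w}) contains a subgraph isomorphic to K_{p_2} ∪ K_{p_3} ∪ ... ∪ K_{p_t}. -/
set_option maxHeartbeats 1000000


open SimpleGraph Finset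

/-- `H` is a subgraph of `G` (up to isomorphism): an injective homomorphism exists. -/
def IsSubgraphOf {α β : Type*} (H : SimpleGraph α) (G : SimpleGraph β) : Prop :=
  ∃ f : α → β, Function.Injective f ∧ ∀ a b, H.Adj a b → G.Adj (f a) (f b)

/-- `G` is `H`-saturated. -/
def IsSat {α β : Type*} (G : SimpleGraph α) (H : SimpleGraph β) : Prop :=
  ¬ IsSubgraphOf H G ∧
    ∀ u v : α, u ≠ v → ¬ G.Adj u v →
      IsSubgraphOf H (G ⊔ SimpleGraph.fromEdgeSet {s(u, v)})

/-- First position of block `i` (for `2 ≤ i`) in `H(n; p₁, …, p_t)`. -/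
def blockStart (p : ℕ → ℕ) (i : ℕ) : ℕ :=
  (p 1 - 2) + ∑ j ∈ Finset.Ico 2 i, (p j + 1)

def inBlock (p : ℕ → ℕ) (i : ℕ) (a : ℕ) : Prop :=
  blockStart p i ≤ a ∧ a < blockStart p i + (p i + 1)

/-- `H(n; p₁, …, p_t) = K_{p₁-2} ∨ (K_{p₂+1} ∪ ⋯ ∪ K_{p_t+1} ∪ I_m)`. -/
def Hgraph (n t : ℕ) (p : ℕ → ℕ) : SimpleGraph (Fin n) :=
  SimpleGraph.fromRel (fun u v =>
    (u : ℕ) < p 1 - 2 ∨ ∃ i, 2 ≤ i ∧ i ≤ t ∧ inBlock p i (u : ℕ) ∧ inBlock p i (v : ℕ))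

/-- The disjoint union `K_{p₁} ∪ K_{p₂} ∪ ⋯ ∪ K_{p_t}`. -/
def cliqueUnion (t : ℕ) (p : ℕ → ℕ) :
    SimpleGraph (Σ i : Fin t, Fin (p ((i : ℕ) + 1))) where
  Adj a b := a ≠ b ∧ a.1 = b.1
  symm := ⟨fun a b h => ⟨h.1.symm, h.2.symm⟩⟩
  loopless := ⟨fun a h => h.1 rfl⟩

/-- The disjoint union `K_{p₂} ∪ ⋯ ∪ K_{p_t}`. -/
def cliqueUnionTail (t : ℕ) (p : ℕ → ℕ) :
    SimpleGraph (Σ i : Fin (t - 1), Fin (p ((i : ℕ) + 2))) where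
  Adj a b := a ≠ b ∧ a.1 = b.1
  symm := ⟨fun a b h => ⟨h.1.symm, h.2.symm⟩⟩
  loopless := ⟨fun a h => h.1 rfl⟩


lemma exists_copy {n t : ℕ} {p : ℕ → ℕ} {G : SimpleGraph (Fin n)}
    (hsat : IsSat G (cliqueUnion t p)) {u w : Fin n} (hne : u ≠ w) (hnadj : ¬ G.Adj u w) :
    ∃ (f : (Σ i : Fin t, Fin (p ((i : ℕ) + 1))) → Fin n) (i₀ : Fin t)
      (xa xb : Fin (p ((i₀ : ℕ) + 1))),
      Function.Injective f ∧ xa ≠ xb ∧ f ⟨i₀, xa⟩ = u ∧ f ⟨i₀, xb⟩ = w ∧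
      (∀ c d : (Σ i : Fin t, Fin (p ((i : ℕ) + 1))), (cliqueUnion t p).Adj c d →
        ¬(c = ⟨i₀, xa⟩ ∧ d = ⟨i₀, xb⟩) → ¬(c = ⟨i₀, xb⟩ ∧ d = ⟨i₀, xa⟩) →
        G.Adj (f c) (f d)) := by
  obtain ⟨f, finj, fhom⟩ := hsat.2 u w hne hnadj
  have key : ∃ a b, (cliqueUnion t p).Adj a b ∧ f a = u ∧ f b = w := by
    by_contra hno
    push_neg at hno
    exact hsat.1 ⟨f, finj, fun a b hab => by
      rcases (sup_adj _ _ _ _).1 (fhom a b hab) with h | h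
      · exact h
      · rw [fromEdgeSet_adj] at h
        rcases Sym2.eq_iff.1 (Set.mem_singleton_iff.1 h.1) with ⟨h1, h2⟩ | ⟨h1, h2⟩
        · exact absurd h2 (hno a b hab h1)
        · exact absurd h1 (hno b a hab.symm h2)⟩
  obtain ⟨a, b, hab, hfa, hfb⟩ := key
  obtain ⟨i₀, xa⟩ := a
  obtain ⟨i₁, xb⟩ := b
  obtain ⟨hne', hfst⟩ := hab
  dsimp at hfst
  subst hfst
  refine ⟨f, i₀, xa, xb, finj, ?_, hfa, hfb, ?_⟩
  · intro h; exact hne' (by rw [h])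
  · intro c d hcd hc1 hc2
    rcases (sup_adj _ _ _ _).1 (fhom c d hcd) with h | h
    · exact h
    · rw [fromEdgeSet_adj] at h
      exfalso
      rcases Sym2.eq_iff.1 (Set.mem_singleton_iff.1 h.1) with ⟨h1, h2⟩ | ⟨h1, h2⟩
      · exact hc1 ⟨finj (h1.trans hfa.symm), finj (h2.trans hfb.symm)⟩
      · exact hc2 ⟨finj (h1.trans hfb.symm), finj (h2.trans hfa.symm)⟩

lemma common_clique {n t : ℕ} {p : ℕ → ℕ} {G : SimpleGraph (Fin n)}
    (ht : 2 ≤ t) (hmono : ∀ i j, 1 ≤ i → i ≤ j → j ≤ t → p i ≤ p j)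
    (hsat : IsSat G (cliqueUnion t p)) {u w : Fin n} (hne : u ≠ w) (hnadj : ¬ G.Adj u w) :
    ∃ Q : Finset (Fin n), p 1 - 2 ≤ Q.card ∧
      (∀ x ∈ Q, G.Adj u x ∧ G.Adj w x) ∧
      (∀ x ∈ Q, ∀ y ∈ Q, x ≠ y → G.Adj x y) := by
  classical
  obtain ⟨f, i₀, xa, xb, finj, hxab, hfa, hfb, hprop⟩ := exists_copy hsat hne hnadj
  have hinjmk : ∀ x y : Fin (p ((i₀ : ℕ) + 1)),
      (⟨i₀, x⟩ : Σ i : Fin t, Fin (p ((i : ℕ) + 1))) = ⟨i₀, y⟩ → x = y := by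
    intro x y he
    exact eq_of_heq (Sigma.mk.inj_iff.mp he).2
  have hmkne : ∀ x y : Fin (p ((i₀ : ℕ) + 1)), x ≠ y →
      (⟨i₀, x⟩ : Σ i : Fin t, Fin (p ((i : ℕ) + 1))) ≠ ⟨i₀, y⟩ :=
    fun x y h he => h (hinjmk _ _ he)
  have hmk : Function.Injective (fun x : Fin (p ((i₀ : ℕ) + 1)) => f ⟨i₀, x⟩) :=
    fun x y hxy => hinjmk _ _ (finj hxy)
  refine ⟨((univ.erase xa).erase xb).image (fun x => f ⟨i₀, x⟩), ?_, ?_, ?_⟩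
  · rw [Finset.card_image_of_injective _ hmk]
    have h1 : ((univ.erase xa).erase xb).card = p ((i₀ : ℕ) + 1) - 2 := by
      rw [Finset.card_erase_of_mem (by simp [Finset.mem_erase, Ne.symm, hxab.symm]),
        Finset.card_erase_of_mem (by simp), Finset.card_univ, Fintype.card_fin]
      omega
    rw [h1]
    have := hmono 1 ((i₀ : ℕ) + 1) le_rfl (by omega) (by omega)
    omega
  · intro x hx
    obtain ⟨y, hy, rfl⟩ := Finset.mem_image.1 hx
    rw [Finset.mem_erase, Finset.mem_erase] at hy
    constructor
    · rw [← hfa]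
      exact (hprop _ _ ⟨hmkne _ _ hy.2.1, rfl⟩
        (fun h => hy.2.1 (hinjmk _ _ h.1))
        (fun h => hy.1 (hinjmk _ _ h.1))).symm
    · rw [← hfb]
      exact (hprop _ _ ⟨hmkne _ _ hy.1, rfl⟩
        (fun h => hy.2.1 (hinjmk _ _ h.1))
        (fun h => hy.1 (hinjmk _ _ h.1))).symm
  · intro x hx y hy hxy
    obtain ⟨x', hx', rfl⟩ := Finset.mem_image.1 hx
    obtain ⟨y', hy', rfl⟩ := Finset.mem_image.1 hy
    rw [Finset.mem_erase, Finset.mem_erase] at hx' hy'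
    have hne' : x' ≠ y' := fun h => hxy (by rw [h])
    exact hprop _ _ ⟨hmkne _ _ hne', rfl⟩
      (fun h => hx'.2.1 (hinjmk _ _ h.1))
      (fun h => hx'.1 (hinjmk _ _ h.1))

lemma H_edge_bound (n t : ℕ) (p : ℕ → ℕ) (hkn : p 1 - 2 ≤ n) :
    2 * ((Hgraph n t p).edgeSet.ncard) ≤
      (p 1 - 2) * (n - 1) + (n - (p 1 - 2)) * (p 1 - 2) +
        ∑ i ∈ Finset.Icc 2 t, p i * (p i + 1) := by
  classical
  set k := p 1 - 2 with hk
  have hcard : (Hgraph n t p).edgeSet.ncard = (Hgraph n t p).edgeFinset.card := by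
    exact Set.ncard_eq_toFinset_card' _
  rw [hcard, ← sum_degrees_eq_twice_card_edges]
  set lowF : Finset (Fin n) := univ.filter (fun u => (u : ℕ) < k) with hlowF
  have hlowcard : lowF.card = k := by
    rw [hlowF]
    rw [show univ.filter (fun u : Fin n => (u : ℕ) < k)
        = (univ : Finset (Fin k)).image (Fin.castLE hkn) by
      ext u
      simp only [Finset.mem_filter, Finset.mem_univ, true_and, Finset.mem_image]
      constructor
      · intro h; exact ⟨⟨(u : ℕ), h⟩, Fin.ext rfl⟩
      · rintro ⟨j, rfl⟩; exact j.2]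
    rw [Finset.card_image_of_injective _ (Fin.castLE_injective hkn), Finset.card_univ,
      Fintype.card_fin]
  set B : ℕ → Finset (Fin n) := fun i => univ.filter (fun x => inBlock p i (x : ℕ)) with hBdef
  have hB : ∀ i, (B i).card ≤ p i + 1 := by
    intro i
    have : (B i).card ≤ (Finset.Ico (blockStart p i) (blockStart p i + (p i + 1))).card := by
      apply Finset.card_le_card_of_injOn Fin.val
      · intro x hx
        rw [hBdef] at hx
        have hx : x ∈ univ ∧ inBlock p i (x : ℕ) := Finset.mem_filter.1 hx
        exact Finset.mem_Ico.2 ⟨hx.2.1, hx.2.2⟩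
      · intro x _ y _ h; exact Fin.val_injective h
    simpa using this
  have hdeghigh : ∀ u : Fin n, k ≤ (u : ℕ) →
      (Hgraph n t p).degree u ≤ k + ∑ i ∈ Finset.Icc 2 t,
        (if inBlock p i (u : ℕ) then p i else 0) := by
    intro u hu
    rw [← card_neighborFinset_eq_degree]
    have hsub : (Hgraph n t p).neighborFinset u ⊆
        lowF ∪ (Finset.Icc 2 t).biUnion
          (fun i => if inBlock p i (u : ℕ) then (B i).erase u else ∅) := by
      intro x hx
      rw [SimpleGraph.mem_neighborFinset] at hx
      obtain ⟨hne, hcond⟩ := hx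
      rcases hcond with h | h
      · rcases h with h | ⟨i, h2i, hit, hbu, hbx⟩
        · omega
        · apply Finset.mem_union_right
          apply Finset.mem_biUnion.2
          refine ⟨i, Finset.mem_Icc.2 ⟨h2i, hit⟩, ?_⟩
          rw [if_pos hbu]
          exact Finset.mem_erase.2 ⟨Ne.symm hne, by simp [hBdef, hbx]⟩
      · rcases h with h | ⟨i, h2i, hit, hbx, hbu⟩
        · exact Finset.mem_union_left _ (by simp [hlowF, hk, h])
        · apply Finset.mem_union_right
          apply Finset.mem_biUnion.2
          refine ⟨i, Finset.mem_Icc.2 ⟨h2i, hit⟩, ?_⟩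
          rw [if_pos hbu]
          exact Finset.mem_erase.2 ⟨Ne.symm hne, by simp [hBdef, hbx]⟩
    calc ((Hgraph n t p).neighborFinset u).card
        ≤ (lowF ∪ (Finset.Icc 2 t).biUnion
            (fun i => if inBlock p i (u : ℕ) then (B i).erase u else ∅)).card :=
          Finset.card_le_card hsub
      _ ≤ lowF.card + ((Finset.Icc 2 t).biUnion
            (fun i => if inBlock p i (u : ℕ) then (B i).erase u else ∅)).card :=
          Finset.card_union_le _ _
      _ ≤ k + ∑ i ∈ Finset.Icc 2 t, (if inBlock p i (u : ℕ) then p i else 0) := by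
          refine Nat.add_le_add (le_of_eq hlowcard) ?_
          refine le_trans (Finset.card_biUnion_le) (Finset.sum_le_sum ?_)
          intro i _
          by_cases hib : inBlock p i (u : ℕ)
          · rw [if_pos hib, if_pos hib]
            have hmem : u ∈ B i := by simp [hBdef, hib]
            rw [Finset.card_erase_of_mem hmem]
            have := hB i
            omega
          · simp [hib]
  have hsplit : (univ : Finset (Fin n)) = lowF ∪ (univ.filter (fun u => k ≤ (u : ℕ))) := by
    ext u
    by_cases h : (u : ℕ) < k <;> simp [hlowF, h, le_of_not_gt, Nat.le_of_not_lt] <;> omega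
  have hdisj : Disjoint lowF (univ.filter (fun u : Fin n => k ≤ (u : ℕ))) := by
    rw [Finset.disjoint_left]
    intro a ha hb
    rw [hlowF, Finset.mem_filter] at ha
    rw [Finset.mem_filter] at hb
    omega
  set highF := univ.filter (fun u : Fin n => k ≤ (u : ℕ)) with hhighF
  have hhighcard : highF.card = n - k := by
    have h1 : lowF.card + highF.card = n := by
      rw [← Finset.card_union_of_disjoint hdisj, ← hsplit, Finset.card_univ, Fintype.card_fin]
    omega
  have hsum : ∑ u : Fin n, (Hgraph n t p).degree u
      = ∑ u ∈ lowF, (Hgraph n t p).degree u + ∑ u ∈ highF, (Hgraph n t p).degree u := by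
    rw [← Finset.sum_union hdisj, ← hsplit]
  rw [hsum]
  have hlowsum : ∑ u ∈ lowF, (Hgraph n t p).degree u ≤ k * (n - 1) := by
    calc ∑ u ∈ lowF, (Hgraph n t p).degree u ≤ ∑ _u ∈ lowF, (n - 1) := by
          apply Finset.sum_le_sum
          intro u _
          have := (Hgraph n t p).degree_lt_card_verts u
          rw [Fintype.card_fin] at this
          omega
      _ = k * (n - 1) := by rw [Finset.sum_const, smul_eq_mul, hlowcard]
  have hhighsum : ∑ u ∈ highF, (Hgraph n t p).degree u
      ≤ (n - k) * k + ∑ i ∈ Finset.Icc 2 t, p i * (p i + 1) := by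
    calc ∑ u ∈ highF, (Hgraph n t p).degree u
        ≤ ∑ u ∈ highF, (k + ∑ i ∈ Finset.Icc 2 t, (if inBlock p i (u : ℕ) then p i else 0)) := by
          apply Finset.sum_le_sum
          intro u hu
          rw [hhighF, Finset.mem_filter] at hu
          exact hdeghigh u hu.2
      _ = highF.card * k + ∑ u ∈ highF, ∑ i ∈ Finset.Icc 2 t,
            (if inBlock p i (u : ℕ) then p i else 0) := by
          rw [Finset.sum_add_distrib, Finset.sum_const, smul_eq_mul]
      _ ≤ (n - k) * k + ∑ i ∈ Finset.Icc 2 t, p i * (p i + 1) := by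
          refine Nat.add_le_add (le_of_eq (by rw [hhighcard])) ?_
          calc ∑ u ∈ highF, ∑ i ∈ Finset.Icc 2 t, (if inBlock p i (u : ℕ) then p i else 0)
              ≤ ∑ u : Fin n, ∑ i ∈ Finset.Icc 2 t, (if inBlock p i (u : ℕ) then p i else 0) :=
                Finset.sum_le_sum_of_subset (Finset.subset_univ _)
            _ = ∑ i ∈ Finset.Icc 2 t, ∑ u : Fin n, (if inBlock p i (u : ℕ) then p i else 0) :=
                Finset.sum_comm
            _ ≤ ∑ i ∈ Finset.Icc 2 t, p i * (p i + 1) := by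
                apply Finset.sum_le_sum
                intro i _
                rw [Finset.sum_ite, Finset.sum_const, Finset.sum_const_zero, add_zero,
                  smul_eq_mul]
                have := hB i
                have hfil : (univ.filter (fun u : Fin n => inBlock p i (u : ℕ))).card
                    = (B i).card := by rw [hBdef]
                rw [hfil]
                calc (B i).card * p i ≤ (p i + 1) * p i := Nat.mul_le_mul_right _ this
                  _ = p i * (p i + 1) := Nat.mul_comm _ _
  omega

lemma ncard_nbhd {n : ℕ} (G : SimpleGraph (Fin n)) [DecidableRel G.Adj] (u : Fin n) :
    (G.neighborSet u).ncard = G.degree u := by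
  rw [← card_neighborFinset_eq_degree, neighborFinset_def, Set.ncard_eq_toFinset_card']

lemma mindeg {n t : ℕ} {p : ℕ → ℕ} {G : SimpleGraph (Fin n)}
    (ht : 2 ≤ t) (hp1 : 2 ≤ p 1)
    (hmono : ∀ i j, 1 ≤ i → i ≤ j → j ≤ t → p i ≤ p j)
    (hn : 3 * (p 1 - 2) + ∑ i ∈ Finset.Icc 2 t, p i * (p i + 1) < n)
    (hsat : IsSat G (cliqueUnion t p))
    (hE : G.edgeSet.ncard ≤ (Hgraph n t p).edgeSet.ncard)
    (v : Fin n)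
    (hmin : ∀ u, (G.neighborSet v).ncard ≤ (G.neighborSet u).ncard) :
    (G.neighborSet v).ncard ≤ p 1 - 2 := by
  classical
  set k := p 1 - 2 with hk
  set T2 := ∑ i ∈ Finset.Icc 2 t, p i * (p i + 1) with hT2def
  have hT2 : p 1 * (p 1 + 1) ≤ T2 := by
    have h2m : p 1 ≤ p 2 := hmono 1 2 le_rfl (by omega) ht
    calc p 1 * (p 1 + 1) ≤ p 2 * (p 2 + 1) := Nat.mul_le_mul h2m (by omega)
      _ ≤ T2 := Finset.single_le_sum (f := fun i => p i * (p i + 1))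
          (fun i _ => Nat.zero_le _) (Finset.mem_Icc.2 ⟨le_rfl, ht⟩)
  have hn' : 3 * k + T2 < n := hn
  have hkn : k ≤ n := by omega
  have hdeg : ∀ u, (G.neighborSet u).ncard = G.degree u := ncard_nbhd G
  set δ := G.degree v with hδdef
  have hmind : ∀ u, δ ≤ G.degree u := fun u => by
    have h := hmin u; rwa [hdeg, hdeg] at h
  rw [hdeg v]
  by_contra hcon
  push_neg at hcon
  have hδk : k + 1 ≤ δ := hcon
  have hEG : G.edgeSet.ncard = G.edgeFinset.card := Set.ncard_eq_toFinset_card' _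
  have hEH : 2 * G.edgeFinset.card ≤ k * (n - 1) + (n - k) * k + T2 := by
    calc 2 * G.edgeFinset.card = 2 * G.edgeSet.ncard := by rw [hEG]
      _ ≤ 2 * (Hgraph n t p).edgeSet.ncard := by omega
      _ ≤ k * (n - 1) + (n - k) * k + T2 := H_edge_bound n t p hkn
  have hsumG : ∑ u : Fin n, G.degree u = 2 * G.edgeFinset.card :=
    G.sum_degrees_eq_twice_card_edges
  rcases le_or_gt δ (2 * k) with hcase | hcase
  · -- main case : k + 1 ≤ δ ≤ 2k
    have hk1 : 1 ≤ k := by omega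
    set S := G.neighborFinset v with hSdef
    have hScard : S.card = δ := rfl
    have hvS : v ∉ S := by
      rw [hSdef, mem_neighborFinset]; exact G.irrefl
    set R := univ \ insert v S with hRdef
    have hRprop : ∀ u ∈ R, u ≠ v ∧ ¬ G.Adj v u := by
      intro u hu
      rw [hRdef, Finset.mem_sdiff, Finset.mem_insert] at hu
      push_neg at hu
      refine ⟨hu.2.1, fun hadj => hu.2.2 ?_⟩
      rw [hSdef, mem_neighborFinset]; exact hadj
    have hδn : δ + 1 ≤ n := by
      have h := Finset.card_le_card (Finset.subset_univ (insert v S))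
      rwa [Finset.card_insert_of_notMem hvS, hScard, Finset.card_univ,
        Fintype.card_fin] at h
    have hRcard : R.card = n - (δ + 1) := by
      rw [hRdef, Finset.card_sdiff_of_subset (Finset.subset_univ _),
        Finset.card_insert_of_notMem hvS, hScard, Finset.card_univ, Fintype.card_fin]
    have hQ : ∀ u ∈ R, ∃ Qu : Finset (Fin n), k ≤ Qu.card ∧ Qu ⊆ S ∧
        (∀ x ∈ Qu, G.Adj u x) ∧ (∀ x ∈ Qu, ∀ y ∈ Qu, x ≠ y → G.Adj x y) := by
      intro u hu
      obtain ⟨hune, hnadj⟩ := hRprop u hu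
      obtain ⟨Qu, hc, hadj, hcl⟩ := common_clique ht hmono hsat (Ne.symm hune) hnadj
      refine ⟨Qu, hc, fun x hx => ?_, fun x hx => (hadj x hx).2, hcl⟩
      rw [hSdef, mem_neighborFinset]; exact (hadj x hx).1
    choose Qf hQc hQS hQu hQcl using hQ
    have hRS : ∀ u, ∀ hu : u ∈ R, k ≤ (S.filter (fun x => G.Adj u x)).card := by
      intro u hu
      refine le_trans (hQc u hu) (Finset.card_le_card ?_)
      intro x hx
      exact Finset.mem_filter.2 ⟨hQS u hu hx, hQu u hu x hx⟩
    have hdc : ∑ x ∈ S, (R.filter (fun u => G.Adj x u)).card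
        = ∑ u ∈ R, (S.filter (fun x => G.Adj u x)).card := by
      simp_rw [Finset.card_filter]
      rw [Finset.sum_comm]
      refine Finset.sum_congr rfl (fun u _ => Finset.sum_congr rfl (fun x _ => ?_))
      exact if_congr (G.adj_comm x u) rfl rfl
    have hdcge : R.card * k ≤ ∑ x ∈ S, (R.filter (fun u => G.Adj x u)).card := by
      rw [hdc]
      calc R.card * k = ∑ _u ∈ R, k := by rw [Finset.sum_const, smul_eq_mul]
        _ ≤ ∑ u ∈ R, (S.filter (fun x => G.Adj u x)).card :=
            Finset.sum_le_sum hRS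
    have hR1 : 1 ≤ R.card := by rw [hRcard]; omega
    obtain ⟨u₀, hu₀⟩ := Finset.card_pos.1 (by omega : 0 < R.card)
    have hint : k * (k - 1) ≤ ∑ x ∈ S, (S.filter (fun y => G.Adj x y)).card := by
      calc k * (k - 1) ≤ (Qf u₀ hu₀).card * ((Qf u₀ hu₀).card - 1) :=
            Nat.mul_le_mul (hQc u₀ hu₀) (by have := hQc u₀ hu₀; omega)
        _ = ∑ _x ∈ Qf u₀ hu₀, ((Qf u₀ hu₀).card - 1) := by
            rw [Finset.sum_const, smul_eq_mul]
        _ ≤ ∑ x ∈ Qf u₀ hu₀, (S.filter (fun y => G.Adj x y)).card := by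
            refine Finset.sum_le_sum (fun x hx => ?_)
            have hsub : (Qf u₀ hu₀).erase x ⊆ S.filter (fun y => G.Adj x y) := by
              intro y hy; rw [Finset.mem_erase] at hy
              exact Finset.mem_filter.2
                ⟨hQS u₀ hu₀ hy.2, hQcl u₀ hu₀ x hx y hy.2 (Ne.symm hy.1)⟩
            calc (Qf u₀ hu₀).card - 1 = ((Qf u₀ hu₀).erase x).card :=
                  (Finset.card_erase_of_mem hx).symm
              _ ≤ _ := Finset.card_le_card hsub
        _ ≤ ∑ x ∈ S, (S.filter (fun y => G.Adj x y)).card :=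
            Finset.sum_le_sum_of_subset (hQS u₀ hu₀)
    have hSdeg : ∀ x ∈ S, (R.filter (fun u => G.Adj x u)).card
        + (S.filter (fun y => G.Adj x y)).card + 1 ≤ G.degree x := by
      intro x hx
      have hAdj : G.Adj x v := by
        rw [hSdef, mem_neighborFinset] at hx; exact hx.symm
      have hsub : (R.filter (fun u => G.Adj x u)) ∪ (S.filter (fun y => G.Adj x y))
          ∪ {v} ⊆ G.neighborFinset x := by
        intro y hy
        rw [Finset.mem_union, Finset.mem_union] at hy
        rw [mem_neighborFinset]
        rcases hy with (hy | hy) | hy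
        · exact (Finset.mem_filter.1 hy).2
        · exact (Finset.mem_filter.1 hy).2
        · rw [Finset.mem_singleton] at hy; rw [hy]; exact hAdj
      have hd1 : Disjoint (R.filter (fun u => G.Adj x u)) (S.filter (fun y => G.Adj x y)) := by
        refine Finset.disjoint_left.2 (fun a ha hb => ?_)
        have haR := (Finset.mem_filter.1 ha).1
        have haS := (Finset.mem_filter.1 hb).1
        rw [hRdef, Finset.mem_sdiff, Finset.mem_insert] at haR
        exact haR.2 (Or.inr haS)
      have hd2 : Disjoint ((R.filter (fun u => G.Adj x u)) ∪ (S.filter (fun y => G.Adj x y)))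
          ({v} : Finset (Fin n)) := by
        refine Finset.disjoint_right.2 (fun a ha hb => ?_)
        rw [Finset.mem_singleton] at ha
        subst ha
        rw [Finset.mem_union] at hb
        rcases hb with hb | hb
        · have := (Finset.mem_filter.1 hb).1
          rw [hRdef, Finset.mem_sdiff, Finset.mem_insert] at this
          exact this.2 (Or.inl rfl)
        · exact hvS (Finset.mem_filter.1 hb).1
      calc (R.filter (fun u => G.Adj x u)).card + (S.filter (fun y => G.Adj x y)).card + 1
          = ((R.filter (fun u => G.Adj x u)) ∪ (S.filter (fun y => G.Adj x y)) ∪ {v}).card := by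
            rw [Finset.card_union_of_disjoint hd2, Finset.card_union_of_disjoint hd1,
              Finset.card_singleton]
        _ ≤ (G.neighborFinset x).card := Finset.card_le_card hsub
        _ = G.degree x := rfl
    have hSsum : R.card * k + k * (k - 1) + δ ≤ ∑ x ∈ S, G.degree x := by
      calc R.card * k + k * (k - 1) + δ
          ≤ (∑ x ∈ S, (R.filter (fun u => G.Adj x u)).card)
            + (∑ x ∈ S, (S.filter (fun y => G.Adj x y)).card) + δ := by
            exact Nat.add_le_add (Nat.add_le_add hdcge hint) le_rfl
        _ = ∑ x ∈ S, ((R.filter (fun u => G.Adj x u)).card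
            + (S.filter (fun y => G.Adj x y)).card + 1) := by
            rw [Finset.sum_add_distrib, Finset.sum_add_distrib, Finset.sum_const,
              smul_eq_mul, mul_one, hScard]
        _ ≤ ∑ x ∈ S, G.degree x := Finset.sum_le_sum hSdeg
    have hRsum : R.card * δ ≤ ∑ u ∈ R, G.degree u := by
      calc R.card * δ = ∑ _u ∈ R, δ := by rw [Finset.sum_const, smul_eq_mul]
        _ ≤ ∑ u ∈ R, G.degree u := Finset.sum_le_sum (fun u _ => hmind u)
    have htot : ∑ u : Fin n, G.degree u
        = δ + ∑ x ∈ S, G.degree x + ∑ u ∈ R, G.degree u := by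
      have huniv : (univ : Finset (Fin n)) = insert v S ∪ R := by
        rw [hRdef, Finset.union_sdiff_of_subset (Finset.subset_univ _)]
      have hdisj2 : Disjoint (insert v S) R := by
        rw [hRdef]; exact Finset.disjoint_sdiff
      rw [huniv, Finset.sum_union hdisj2, Finset.sum_insert hvS]
    have hbig : R.card * k + k * (k - 1) + 2 * δ + R.card * δ ≤ 2 * G.edgeFinset.card := by
      rw [← hsumG, htot]
      linarith [hSsum, hRsum]
    -- final arithmetic contradiction
    have hT2k : k ≤ T2 := by
      have h0 : p 1 ≤ p 1 * (p 1 + 1) := Nat.le_mul_of_pos_right _ (by omega)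
      omega
    zify [hkn, hk1, hδn, show 1 ≤ n by omega] at hEH hbig hRcard
    have hs1 : (0:ℤ) ≤ ((δ:ℤ) - k - 1) * ((T2:ℤ) + 1 - ((δ:ℤ) - k)) := by
      apply mul_nonneg
      · have : (k:ℤ) + 1 ≤ δ := by exact_mod_cast hδk
        linarith
      · have h1 : (δ:ℤ) ≤ 2 * k := by exact_mod_cast hcase
        have h2 : (k:ℤ) ≤ T2 := by exact_mod_cast hT2k
        linarith
    have hs2 : (0:ℤ) ≤ ((δ:ℤ) - k) * ((n:ℤ) - 3 * k - T2 - 1) := by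
      apply mul_nonneg
      · have : (k:ℤ) + 1 ≤ δ := by exact_mod_cast hδk
        linarith
      · have : 3 * (k:ℤ) + T2 < n := by exact_mod_cast hn'
        linarith
    have hrn : (R.card : ℤ) = (n:ℤ) - δ - 1 := by
      rw [hRcard]; push_cast; ring
    nlinarith [hEH, hbig, hs1, hs2, hrn]
  · -- dense case : δ ≥ 2k + 1
    have hnd : n * δ ≤ ∑ u : Fin n, G.degree u := by
      calc n * δ = ∑ _u : Fin n, δ := by rw [Finset.sum_const, smul_eq_mul, Finset.card_univ,
            Fintype.card_fin]
        _ ≤ ∑ u : Fin n, G.degree u := Finset.sum_le_sum (fun u _ => hmind u)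
    rw [hsumG] at hnd
    have h1 : k * (n - 1) ≤ k * n := Nat.mul_le_mul_left _ (Nat.sub_le _ _)
    have h2 : (n - k) * k ≤ n * k := Nat.mul_le_mul_right _ (Nat.sub_le _ _)
    have h3 : n * (2 * k + 1) ≤ n * δ := Nat.mul_le_mul_left _ hcase
    nlinarith [hEH, hnd, h1, h2, h3, hn']

/-- For `w ∉ S ∪ {v}`, `G[V(G) \ (S ∪ {v,w})]` contains `K_{p₂} ∪ ⋯ ∪ K_{p_t}`. -/
theorem tail_copy_exists (n t : ℕ) (p : ℕ → ℕ) (ht : 2 ≤ t) (hp1 : 2 ≤ p 1)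
    (hmono : ∀ i j, 1 ≤ i → i ≤ j → j ≤ t → p i ≤ p j)
    (hn : 3 * (p 1 - 2) + ∑ i ∈ Finset.Icc 2 t, p i * (p i + 1) < n)
    (G : SimpleGraph (Fin n)) (hsat : IsSat G (cliqueUnion t p))
    (hE : G.edgeSet.ncard ≤ (Hgraph n t p).edgeSet.ncard)
    (v : Fin n)
    (hmin : ∀ u, (G.neighborSet v).ncard ≤ (G.neighborSet u).ncard)
    (w : Fin n) (hw : w ∉ G.neighborSet v ∪ {v}) :
    IsSubgraphOf (cliqueUnionTail t p)
      (G.induce ((G.neighborSet v ∪ {v, w})ᶜ)) := by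
  classical
  rw [Set.mem_union, Set.mem_singleton_iff] at hw
  push_neg at hw
  have hne : v ≠ w := fun h => hw.2 h.symm
  have hnadj : ¬ G.Adj v w := fun h => hw.1 h
  obtain ⟨f, i₀, xa, xb, finj, hxab, hfa, hfb, hprop⟩ := exists_copy hsat hne hnadj
  have hinjmk : ∀ (j : Fin t) (x y : Fin (p ((j : ℕ) + 1))),
      (⟨j, x⟩ : Σ i : Fin t, Fin (p ((i : ℕ) + 1))) = ⟨j, y⟩ → x = y := by
    intro j x y he
    exact eq_of_heq (Sigma.mk.inj_iff.mp he).2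
  have hfstmk : ∀ (j j' : Fin t) (x : Fin (p ((j : ℕ) + 1))) (y : Fin (p ((j' : ℕ) + 1))),
      (⟨j, x⟩ : Σ i : Fin t, Fin (p ((i : ℕ) + 1))) = ⟨j', y⟩ → j = j' := by
    intro j j' x y he
    exact congrArg Sigma.fst he
  have hti : (i₀ : ℕ) < t := i₀.2
  have hpi0 : p 1 ≤ p ((i₀ : ℕ) + 1) := hmono 1 _ le_rfl (by omega) (by omega)
  -- the clique block covers the neighborhood exactly
  set Qf : Finset (Fin n) :=
    ((univ.erase xa).erase xb).image (fun x => f ⟨i₀, x⟩) with hQf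
  have hmk : Function.Injective (fun x : Fin (p ((i₀ : ℕ) + 1)) => f ⟨i₀, x⟩) :=
    fun x y hxy => hinjmk i₀ _ _ (finj hxy)
  have hQcard : Qf.card = p ((i₀ : ℕ) + 1) - 2 := by
    rw [hQf, Finset.card_image_of_injective _ hmk,
      Finset.card_erase_of_mem (by simp [Finset.mem_erase, Ne.symm, hxab.symm]),
      Finset.card_erase_of_mem (by simp), Finset.card_univ, Fintype.card_fin]
    omega
  have hQN : (↑Qf : Set (Fin n)) ⊆ G.neighborSet v := by
    intro x hx
    rw [Finset.coe_image] at hx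
    obtain ⟨y, hy, rfl⟩ := hx
    rw [Finset.coe_erase, Set.mem_diff] at hy
    obtain ⟨hy1, hy2⟩ := hy
    rw [Finset.coe_erase, Set.mem_diff] at hy1
    have hyb : y ≠ xb := fun h => hy2 (by simp [h])
    have hya : y ≠ xa := fun h => hy1.2 (by simp [h])
    rw [SimpleGraph.mem_neighborSet, ← hfa]
    refine hprop ⟨i₀, xa⟩ ⟨i₀, y⟩ ⟨fun h => hya (hinjmk i₀ _ _ h).symm, rfl⟩
      (fun h => hyb (hinjmk i₀ _ _ h.2)) (fun h => hxab (hinjmk i₀ _ _ h.1))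
  have hmd := mindeg ht hp1 hmono hn hsat hE v hmin
  have hNQ : G.neighborSet v = ↑Qf := by
    refine (Set.eq_of_subset_of_ncard_le hQN ?_ (Set.toFinite _)).symm
    rw [Set.ncard_coe_finset, hQcard]
    omega
  have hpeq : p ((i₀ : ℕ) + 1) = p 1 := by
    have h1 : (G.neighborSet v).ncard = Qf.card := by rw [hNQ, Set.ncard_coe_finset]
    rw [hQcard] at h1
    omega
  -- the index map avoiding i₀
  have htm : 1 ≤ t - 1 := by omega
  set J : Fin (t - 1) → Fin t := fun kk =>
    if (kk : ℕ) < (i₀ : ℕ) then ⟨(kk : ℕ), by omega⟩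
    else ⟨(kk : ℕ) + 1, by have := kk.2; omega⟩ with hJ
  have hJval : ∀ kk : Fin (t - 1),
      (J kk : ℕ) = if (kk : ℕ) < (i₀ : ℕ) then (kk : ℕ) else (kk : ℕ) + 1 := by
    intro kk
    by_cases h : (kk : ℕ) < (i₀ : ℕ) <;> simp [hJ, h]
  have hJne : ∀ kk, J kk ≠ i₀ := by
    intro kk h
    have h1 := hJval kk
    rw [h] at h1
    split_ifs at h1 <;> omega
  have hJinj : Function.Injective J := by
    intro a b h
    have h1 := hJval a
    have h2 := hJval b
    rw [h] at h1
    apply Fin.ext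
    split_ifs at h1 h2 <;> omega
  have hJle : ∀ kk : Fin (t - 1), p ((kk : ℕ) + 2) ≤ p ((J kk : ℕ) + 1) := by
    intro kk
    have h1 := hJval kk
    have hkk := kk.2
    by_cases h : (kk : ℕ) < (i₀ : ℕ)
    · rw [if_pos h] at h1
      rw [h1]
      calc p ((kk : ℕ) + 2) ≤ p ((i₀ : ℕ) + 1) := hmono _ _ (by omega) (by omega) (by omega)
        _ = p 1 := hpeq
        _ ≤ p ((kk : ℕ) + 1) := hmono 1 _ le_rfl (by omega) (by omega)
    · rw [if_neg h] at h1
      rw [h1]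
  -- membership of images in the complement
  have hmem : ∀ (kk : Fin (t - 1)) (y : Fin (p ((J kk : ℕ) + 1))),
      f ⟨J kk, y⟩ ∈ (G.neighborSet v ∪ {v, w})ᶜ := by
    intro kk y
    rw [Set.mem_compl_iff, Set.mem_union, Set.mem_insert_iff, Set.mem_singleton_iff]
    push_neg
    refine ⟨?_, ?_, ?_⟩
    · rw [hNQ]
      intro hmem'
      rw [Finset.mem_coe, hQf, Finset.mem_image] at hmem'
      obtain ⟨z, _, hz⟩ := hmem'
      exact hJne kk (hfstmk _ _ _ _ (finj hz)).symm
    · rw [← hfa]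
      intro h
      exact hJne kk (hfstmk _ _ _ _ (finj h))
    · rw [← hfb]
      intro h
      exact hJne kk (hfstmk _ _ _ _ (finj h))
  refine ⟨fun c => ⟨f ⟨J c.1, Fin.castLE (hJle c.1) c.2⟩, hmem c.1 _⟩, ?_, ?_⟩
  · rintro ⟨kk, x⟩ ⟨kk', x'⟩ h
    rw [Subtype.mk.injEq] at h
    have he := finj h
    have hJeq : J kk = J kk' := hfstmk _ _ _ _ he
    have hkk : kk = kk' := hJinj hJeq
    subst hkk
    have hx : Fin.castLE (hJle kk) x = Fin.castLE (hJle kk) x' := hinjmk _ _ _ he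
    have : x = x' := Fin.castLE_injective _ hx
    rw [this]
  · rintro ⟨kk, x⟩ ⟨kk', x'⟩ ⟨hne', hfst⟩
    dsimp at hfst
    subst hfst
    have hxx : x ≠ x' := by
      intro h
      exact hne' (by rw [h])
    have hadj : G.Adj (f ⟨J kk, Fin.castLE (hJle kk) x⟩) (f ⟨J kk, Fin.castLE (hJle kk) x'⟩) := by
      refine hprop _ _ ⟨?_, rfl⟩ ?_ ?_
      · intro h
        exact hxx (Fin.castLE_injective _ (hinjmk _ _ _ h))
      · intro h
        exact hJne kk (hfstmk _ _ _ _ h.1)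
      · intro h
        exact hJne kk (hfstmk _ _ _ _ h.1)
    exact hadj
end

section
/- Under the setup of the previous lemma, if u ∉ S ∪ {v} is adjacent in G to w, then u belongs to the vertex set of every copy H_{vw} of K_{p_2} ∪ ... ∪ K_{p_t} found in G[V(G) \ (S ∪ {v,w})] arising from the saturation of the edge vw; i.e., any vertex of V(G) \ (S ∪ {v}) adjacent to w must lie in V(H_{vw}). -/
open SimpleGraph Finset

section AuxLemmas

lemma sigma_eq_of_vals {t : ℕ} {p : ℕ → ℕ}
    (a b : Σ i : Fin t, Fin (p ((i : ℕ) + 1)))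
    (h1 : (a.1 : ℕ) = (b.1 : ℕ)) (h2 : (a.2 : ℕ) = (b.2 : ℕ)) : a = b := by
  rcases a with ⟨⟨i, hi⟩, ⟨j, hj⟩⟩
  rcases b with ⟨⟨i', hi'⟩, ⟨j', hj'⟩⟩
  simp only [Fin.val_mk] at h1 h2
  subst h1; subst h2; rfl


lemma exists_blockmates {n t : ℕ} {p : ℕ → ℕ}
    (hmono : ∀ i j, 1 ≤ i → i ≤ j → j ≤ t → p i ≤ p j)
    (G : SimpleGraph (Fin n)) (hsat : IsSat G (cliqueUnion t p))
    (v x : Fin n) (hne : v ≠ x) (hnadj : ¬ G.Adj v x) :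
    ∃ B : Finset (Fin n), p 1 - 2 ≤ B.card ∧
      (∀ b ∈ B, G.Adj v b ∧ G.Adj x b) ∧
      (∀ b ∈ B, ∀ c ∈ B, b ≠ c → G.Adj b c) := by
  classical
  obtain ⟨g, ginj, ghom⟩ := hsat.2 v x hne hnadj
  by_cases hall : ∀ a b, (cliqueUnion t p).Adj a b → G.Adj (g a) (g b)
  · exact absurd ⟨g, ginj, hall⟩ hsat.1
  push_neg at hall
  obtain ⟨a₀, b₀, hab₀, hnG₀⟩ := hall
  -- the new edge is used
  have hGor : ∀ y z, (G ⊔ SimpleGraph.fromEdgeSet {s(v, x)}).Adj y z →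
      G.Adj y z ∨ (y = v ∧ z = x) ∨ (y = x ∧ z = v) := by
    intro y z h
    rw [SimpleGraph.sup_adj, SimpleGraph.fromEdgeSet_adj] at h
    rcases h with h | ⟨h, _⟩
    · exact Or.inl h
    · simp only [Set.mem_singleton_iff, Sym2.eq_iff] at h
      tauto
  have key : ∀ c d : Σ i : Fin t, Fin (p ((i : ℕ) + 1)),
      (cliqueUnion t p).Adj c d → g c = v → g d = x →
      ∃ B : Finset (Fin n), p 1 - 2 ≤ B.card ∧
        (∀ b ∈ B, G.Adj v b ∧ G.Adj x b) ∧
        (∀ b ∈ B, ∀ c ∈ B, b ≠ c → G.Adj b c) := by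
    intro c d hcd hcv hdx
    obtain ⟨hcd_ne, hcd_fst⟩ := hcd
    set Bidx : Finset (Σ i : Fin t, Fin (p ((i : ℕ) + 1))) :=
      ((univ.filter fun e => e.1 = c.1).erase c).erase d with hBidx
    -- every element of Bidx maps by g to a common neighbor of v and x
    have hmem : ∀ e ∈ Bidx, e ≠ c ∧ e ≠ d ∧ e.1 = c.1 := by
      intro e he
      simp only [hBidx, Finset.mem_erase, Finset.mem_filter, Finset.mem_univ, true_and] at he
      exact ⟨he.2.1, he.1, he.2.2⟩
    have hgood : ∀ e ∈ Bidx, G.Adj v (g e) ∧ G.Adj x (g e) := by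
      intro e he
      obtain ⟨hec, hed, hfst⟩ := hmem e he
      have hgev : g e ≠ v := by
        intro h; exact hec (ginj (h.trans hcv.symm))
      have hgex : g e ≠ x := by
        intro h; exact hed (ginj (h.trans hdx.symm))
      constructor
      · have := ghom c e ⟨Ne.symm hec, hfst.symm⟩
        rw [hcv] at this
        rcases hGor _ _ this with h | ⟨_, h⟩ | ⟨h, _⟩
        · exact h
        · exact absurd h hgex
        · exact absurd h hne
      · have := ghom d e ⟨Ne.symm hed, by rw [← hcd_fst, hfst]⟩
        rw [hdx] at this
        rcases hGor _ _ this with h | ⟨h, _⟩ | ⟨_, h⟩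
        · exact h
        · exact absurd h (Ne.symm hne)
        · exact absurd h hgev
    refine ⟨Bidx.image g, ?_, ?_, ?_⟩
    · -- cardinality
      have hfc : (univ.filter fun e : Σ i : Fin t, Fin (p ((i : ℕ) + 1)) => e.1 = c.1)
          = univ.image (fun j : Fin (p ((c.1 : ℕ) + 1)) => (⟨c.1, j⟩ : Σ i : Fin t, Fin (p ((i : ℕ) + 1)))) := by
        ext e
        simp only [Finset.mem_filter, Finset.mem_univ, true_and, Finset.mem_image]
        constructor
        · rintro h
          rcases e with ⟨i, j⟩
          dsimp at h
          subst h
          exact ⟨j, rfl⟩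
        · rintro ⟨j, rfl⟩; rfl
      have hinj : Function.Injective (fun j : Fin (p ((c.1 : ℕ) + 1)) => (⟨c.1, j⟩ : Σ i : Fin t, Fin (p ((i : ℕ) + 1)))) := by
        intro j k h
        have := congrArg (fun z : Σ i : Fin t, Fin (p ((i : ℕ) + 1)) => (z.2 : ℕ)) h
        exact Fin.ext this
      have hcard : (univ.filter fun e : Σ i : Fin t, Fin (p ((i : ℕ) + 1)) => e.1 = c.1).card
          = p ((c.1 : ℕ) + 1) := by
        rw [hfc, Finset.card_image_of_injective _ hinj, Finset.card_univ, Fintype.card_fin]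
      have h1 : p 1 ≤ p ((c.1 : ℕ) + 1) := hmono 1 _ le_rfl (by omega) (by omega)
      have hb : (Bidx.image g).card = Bidx.card := Finset.card_image_of_injective _ ginj
      have : (univ.filter fun e : Σ i : Fin t, Fin (p ((i : ℕ) + 1)) => e.1 = c.1).card - 2 ≤ Bidx.card := by
        calc _ ≤ ((univ.filter fun e : Σ i : Fin t, Fin (p ((i : ℕ) + 1)) => e.1 = c.1).erase c).card - 1 := by
              have := Finset.pred_card_le_card_erase (s := (univ.filter fun e : Σ i : Fin t, Fin (p ((i : ℕ) + 1)) => e.1 = c.1)) (a := c)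
              omega
          _ ≤ Bidx.card := Finset.pred_card_le_card_erase
      omega
    · rintro b hb
      rw [Finset.mem_image] at hb
      obtain ⟨e, he, rfl⟩ := hb
      exact hgood e he
    · rintro b hb c' hc' hbc
      rw [Finset.mem_image] at hb hc'
      obtain ⟨e, he, rfl⟩ := hb
      obtain ⟨e', he', rfl⟩ := hc'
      have hee' : e ≠ e' := fun h => hbc (congrArg g h)
      obtain ⟨hec, hed, hfst⟩ := hmem e he
      obtain ⟨hec', hed', hfst'⟩ := hmem e' he'
      have := ghom e e' ⟨hee', hfst.trans hfst'.symm⟩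
      rcases hGor _ _ this with h | ⟨h, _⟩ | ⟨h, _⟩
      · exact h
      · exact absurd h (fun h' => hec (ginj (h'.trans hcv.symm)))
      · exact absurd h (fun h' => hed (ginj (h'.trans hdx.symm)))
  rcases hGor _ _ (ghom a₀ b₀ hab₀) with h | ⟨h1, h2⟩ | ⟨h1, h2⟩
  · exact absurd h hnG₀
  · exact key a₀ b₀ hab₀ h1 h2
  · exact key b₀ a₀ ((cliqueUnion t p).adj_symm hab₀) h2 h1

lemma Hgraph_deg_sum (n t : ℕ) (p : ℕ → ℕ) [DecidableRel (Hgraph n t p).Adj]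
    (hqn : p 1 - 2 + 1 ≤ n) :
    (∑ x, (Hgraph n t p).degree x) + (p 1 - 2) * ((p 1 - 2) + 1)
      ≤ 2 * (p 1 - 2) * n + ∑ i ∈ Finset.Icc 2 t, p i * (p i + 1) := by
  classical
  set q := p 1 - 2 with hq
  set P := ∑ i ∈ Finset.Icc 2 t, p i * (p i + 1) with hP
  set A : Finset (Fin n) := univ.filter (fun x : Fin n => (x : ℕ) < q) with hA
  set B : Finset (Fin n) := univ.filter (fun x : Fin n => ¬ (x : ℕ) < q) with hB
  have hsplit : (∑ x, (Hgraph n t p).degree x)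
      = ∑ x ∈ A, (Hgraph n t p).degree x + ∑ x ∈ B, (Hgraph n t p).degree x :=
    (Finset.sum_filter_add_sum_filter_not univ _ _).symm
  have hcardA : A.card ≤ q := by
    have : ∀ x ∈ A, (x : ℕ) ∈ Finset.range q := by
      intro x hx
      rw [hA, Finset.mem_filter] at hx
      simpa using hx.2
    calc A.card ≤ (Finset.range q).card :=
          Finset.card_le_card_of_injOn (fun x => (x : ℕ)) this
            (fun a _ b _ h => Fin.ext h)
      _ = q := Finset.card_range q
  have hcardAB : A.card + B.card = n := by
    rw [hA, hB]
    rw [Finset.card_filter_add_card_filter_not]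
    simp
  -- per-vertex degree bound for x ∈ B
  have hblockcard : ∀ i, (univ.filter (fun y : Fin n => inBlock p i (y : ℕ))).card ≤ p i + 1 := by
    intro i
    have : ∀ y ∈ univ.filter (fun y : Fin n => inBlock p i (y : ℕ)),
        (y : ℕ) ∈ Finset.Ico (blockStart p i) (blockStart p i + (p i + 1)) := by
      intro y hy
      rw [Finset.mem_filter] at hy
      rw [Finset.mem_Ico]
      exact hy.2
    calc (univ.filter (fun y : Fin n => inBlock p i (y : ℕ))).card
        ≤ (Finset.Ico (blockStart p i) (blockStart p i + (p i + 1))).card :=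
          Finset.card_le_card_of_injOn (fun y => (y : ℕ)) this (fun a _ b _ h => Fin.ext h)
      _ = p i + 1 := by rw [Nat.card_Ico]; omega
  have hdegB : ∀ x ∈ B, (Hgraph n t p).degree x
      ≤ q + ∑ i ∈ (Finset.Icc 2 t).filter (fun i => inBlock p i (x : ℕ)), p i := by
    intro x hxB
    rw [hB, Finset.mem_filter] at hxB
    have hxq : ¬ (x : ℕ) < q := hxB.2
    rw [← SimpleGraph.card_neighborFinset_eq_degree]
    have hsub : (Hgraph n t p).neighborFinset x ⊆
        A ∪ ((Finset.Icc 2 t).filter (fun i => inBlock p i (x : ℕ))).biUnion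
          (fun i => (univ.filter (fun y : Fin n => inBlock p i (y : ℕ))).erase x) := by
      intro y hy
      rw [SimpleGraph.mem_neighborFinset] at hy
      have hy' : x ≠ y ∧ (((x:ℕ) < q ∨ ∃ i, 2 ≤ i ∧ i ≤ t ∧ inBlock p i (x:ℕ) ∧ inBlock p i (y:ℕ))
          ∨ ((y:ℕ) < q ∨ ∃ i, 2 ≤ i ∧ i ≤ t ∧ inBlock p i (y:ℕ) ∧ inBlock p i (x:ℕ))) := by
        rw [Hgraph, SimpleGraph.fromRel_adj] at hy
        exact hy
      obtain ⟨hxy, hcases⟩ := hy'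
      rw [Finset.mem_union]
      have hyA : (y : ℕ) < q → y ∈ A := by
        intro h; rw [hA, Finset.mem_filter]; exact ⟨Finset.mem_univ y, h⟩
      have hyblock : ∀ i, 2 ≤ i → i ≤ t → inBlock p i (x:ℕ) → inBlock p i (y:ℕ) →
          y ∈ ((Finset.Icc 2 t).filter (fun i => inBlock p i (x : ℕ))).biUnion
            (fun i => (univ.filter (fun y : Fin n => inBlock p i (y : ℕ))).erase x) := by
        intro i h2 hti hbx hby
        rw [Finset.mem_biUnion]
        refine ⟨i, ?_, ?_⟩
        · rw [Finset.mem_filter, Finset.mem_Icc]; exact ⟨⟨h2, hti⟩, hbx⟩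
        · rw [Finset.mem_erase, Finset.mem_filter]
          exact ⟨Ne.symm hxy, Finset.mem_univ y, hby⟩
      rcases hcases with (h | ⟨i, h2, hti, hbx, hby⟩) | (h | ⟨i, h2, hti, hby, hbx⟩)
      · exact absurd h hxq
      · exact Or.inr (hyblock i h2 hti hbx hby)
      · exact Or.inl (hyA h)
      · exact Or.inr (hyblock i h2 hti hbx hby)
    calc ((Hgraph n t p).neighborFinset x).card
        ≤ (A ∪ ((Finset.Icc 2 t).filter (fun i => inBlock p i (x : ℕ))).biUnion
          (fun i => (univ.filter (fun y : Fin n => inBlock p i (y : ℕ))).erase x)).card :=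
          Finset.card_le_card hsub
      _ ≤ A.card + (((Finset.Icc 2 t).filter (fun i => inBlock p i (x : ℕ))).biUnion
          (fun i => (univ.filter (fun y : Fin n => inBlock p i (y : ℕ))).erase x)).card :=
          Finset.card_union_le _ _
      _ ≤ q + ∑ i ∈ (Finset.Icc 2 t).filter (fun i => inBlock p i (x : ℕ)), p i := by
          gcongr ?_ + ?_
          case h₂ => ?_
          calc (((Finset.Icc 2 t).filter (fun i => inBlock p i (x : ℕ))).biUnion
              (fun i => (univ.filter (fun y : Fin n => inBlock p i (y : ℕ))).erase x)).card
              ≤ ∑ i ∈ (Finset.Icc 2 t).filter (fun i => inBlock p i (x : ℕ)),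
                ((univ.filter (fun y : Fin n => inBlock p i (y : ℕ))).erase x).card :=
              Finset.card_biUnion_le
            _ ≤ ∑ i ∈ (Finset.Icc 2 t).filter (fun i => inBlock p i (x : ℕ)), p i := by
              apply Finset.sum_le_sum
              intro i hi
              rw [Finset.mem_filter] at hi
              have hxmem : x ∈ univ.filter (fun y : Fin n => inBlock p i (y : ℕ)) := by
                rw [Finset.mem_filter]; exact ⟨Finset.mem_univ x, hi.2⟩
              rw [Finset.card_erase_of_mem hxmem]
              have := hblockcard i
              omega
  -- total block contribution
  have hblocktotal : ∑ x ∈ B, (∑ i ∈ (Finset.Icc 2 t).filter (fun i => inBlock p i (x : ℕ)), p i) ≤ P := by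
    calc ∑ x ∈ B, (∑ i ∈ (Finset.Icc 2 t).filter (fun i => inBlock p i (x : ℕ)), p i)
        ≤ ∑ x : Fin n, (∑ i ∈ (Finset.Icc 2 t).filter (fun i => inBlock p i (x : ℕ)), p i) :=
          Finset.sum_le_sum_of_subset (Finset.subset_univ B)
      _ = ∑ x : Fin n, ∑ i ∈ Finset.Icc 2 t, (if inBlock p i (x : ℕ) then p i else 0) := by
          apply Finset.sum_congr rfl
          intro x _
          rw [Finset.sum_filter]
      _ = ∑ i ∈ Finset.Icc 2 t, ∑ x : Fin n, (if inBlock p i (x : ℕ) then p i else 0) :=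
          Finset.sum_comm
      _ ≤ P := by
          rw [hP]
          apply Finset.sum_le_sum
          intro i _
          rw [← Finset.sum_filter]
          rw [Finset.sum_const, smul_eq_mul]
          calc (univ.filter (fun x : Fin n => inBlock p i (x : ℕ))).card * p i
              ≤ (p i + 1) * p i := Nat.mul_le_mul_right _ (hblockcard i)
            _ = p i * (p i + 1) := Nat.mul_comm _ _
  have hsumB : ∑ x ∈ B, (Hgraph n t p).degree x ≤ B.card * q + P := by
    calc ∑ x ∈ B, (Hgraph n t p).degree x
        ≤ ∑ x ∈ B, (q + ∑ i ∈ (Finset.Icc 2 t).filter (fun i => inBlock p i (x : ℕ)), p i) :=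
          Finset.sum_le_sum hdegB
      _ = B.card * q + ∑ x ∈ B, (∑ i ∈ (Finset.Icc 2 t).filter (fun i => inBlock p i (x : ℕ)), p i) := by
          rw [Finset.sum_add_distrib, Finset.sum_const, smul_eq_mul]
      _ ≤ B.card * q + P := by omega
  have hsumA : ∑ x ∈ A, (Hgraph n t p).degree x ≤ A.card * (n - 1) := by
    apply Finset.sum_le_card_nsmul
    intro x _
    have := (Hgraph n t p).degree_lt_card_verts x
    rw [Fintype.card_fin] at this
    omega
  -- final arithmetic
  have h1 : 1 ≤ n := by omega
  rw [hsplit]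
  have hA' : A.card ≤ q := hcardA
  -- cast to integers
  have : (A.card : ℤ) * (n - 1) + (B.card * q + P) + q * (q + 1) ≤ 2 * q * n + P := by
    have hBc : (B.card : ℤ) = n - A.card := by
      have := hcardAB; push_cast [← this]; ring
    rw [hBc]
    have hAq : (A.card : ℤ) ≤ q := by exact_mod_cast hA'
    have hqn' : (q : ℤ) + 1 ≤ n := by exact_mod_cast hqn
    nlinarith [hAq, hqn', sq_nonneg ((A.card : ℤ) - q)]
  have hfin : A.card * (n - 1) + (B.card * q + P) + q * (q + 1) ≤ 2 * q * n + P := by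
    have hcast : (A.card : ℤ) * ((n : ℤ) - 1) = ((A.card * (n - 1) : ℕ) : ℤ) := by
      push_cast [Nat.cast_sub h1]
      ring
    rw [hcast] at this
    exact_mod_cast this
  calc ∑ x ∈ A, (Hgraph n t p).degree x + ∑ x ∈ B, (Hgraph n t p).degree x + q * (q + 1)
      ≤ A.card * (n - 1) + (B.card * q + P) + q * (q + 1) := by omega
    _ ≤ 2 * q * n + P := hfin

lemma count_arith (n q P δ E : ℤ) (hq0 : 0 ≤ q) (hδ0 : 0 ≤ δ) (hδn : δ + 1 ≤ n)
    (hF1 : n * δ ≤ E)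
    (hF2 : (n - 1 - δ) * δ + (δ + ((q * q - q) + (n - 1 - δ) * q + δ)) ≤ E)
    (hF3 : E + q * (q + 1) ≤ 2 * q * n + P)
    (hn : 3 * q + P < n) (hp6 : (q + 2) * (q + 3) ≤ P) : δ ≤ q := by
  by_contra hcon
  push_neg at hcon
  have hPQ : q ≤ P := by nlinarith [sq_nonneg q]
  have hD2q : δ ≤ 2 * q := by
    by_contra hc
    push_neg at hc
    have h1 : n * (2 * q + 1) ≤ n * δ := by
      apply mul_le_mul_of_nonneg_left (by omega) (by omega)
    nlinarith
  have hN4q : 4 * q + 1 ≤ n := by omega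
  have hprod1 : (0 : ℤ) ≤ (δ - q - 1) * (2 * q - δ) := mul_nonneg (by omega) (by omega)
  have hprod2 : (0 : ℤ) ≤ (δ - q - 1) * (n - 4 * q) := mul_nonneg (by omega) (by omega)
  nlinarith [hF2, hF3, hprod1, hprod2, hn]

end AuxLemmas

/-- Any vertex outside `S ∪ {v}` adjacent to `w` must lie in `V(H_{vw})`. -/
theorem adj_mem_copy (n t : ℕ) (p : ℕ → ℕ) (ht : 2 ≤ t) (hp1 : 2 ≤ p 1)
    (hmono : ∀ i j, 1 ≤ i → i ≤ j → j ≤ t → p i ≤ p j)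
    (hn : 3 * (p 1 - 2) + ∑ i ∈ Finset.Icc 2 t, p i * (p i + 1) < n)
    (G : SimpleGraph (Fin n)) (hsat : IsSat G (cliqueUnion t p))
    (hE : G.edgeSet.ncard ≤ (Hgraph n t p).edgeSet.ncard)
    (v : Fin n)
    (hmin : ∀ u, (G.neighborSet v).ncard ≤ (G.neighborSet u).ncard)
    (w : Fin n) (hw : w ∉ G.neighborSet v ∪ {v})
    (f : (Σ i : Fin (t - 1), Fin (p ((i : ℕ) + 2))) → Fin n)
    (hfinj : Function.Injective f)
    (hfhom : ∀ a b, (cliqueUnionTail t p).Adj a b → G.Adj (f a) (f b))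
    (hfav : ∀ a, f a ∉ G.neighborSet v ∪ {v, w}) :
    ∀ u : Fin n, u ∉ G.neighborSet v ∪ {v} → G.Adj u w → u ∈ Set.range f := by
  classical
  intro u hu hadjuw
  by_contra hu'
  -- basic facts about w and u
  have hwv : w ≠ v := by rintro rfl; exact hw (by simp)
  have hwnadj : ¬ G.Adj v w := fun h => hw (Set.mem_union_left _ h)
  have huv : u ≠ v := by rintro rfl; exact hu (by simp)
  have hunadj : ¬ G.Adj v u := fun h => hu (Set.mem_union_left _ h)
  have huw : u ≠ w := G.ne_of_adj hadjuw
  set q := p 1 - 2 with hq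
  set P := ∑ i ∈ Finset.Icc 2 t, p i * (p i + 1) with hPdef
  set S := G.neighborFinset v with hS
  set δ := S.card with hδdef
  have hδdeg : δ = G.degree v := rfl
  -- degree facts
  have hncard : ∀ x, (G.neighborSet x).ncard = G.degree x := by
    intro x
    rw [Set.ncard_eq_toFinset_card', Set.toFinset_card]
    exact G.card_neighborSet_eq_degree x
  have hdegmin : ∀ x, G.degree v ≤ G.degree x := by
    intro x; have := hmin x; rwa [hncard, hncard] at this
  -- P is big
  have hp6 : (q + 2) * (q + 3) ≤ P := by
    have hp2 : p 1 ≤ p 2 := hmono 1 2 le_rfl (by omega) ht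
    have h2mem : 2 ∈ Finset.Icc 2 t := Finset.mem_Icc.mpr ⟨le_rfl, ht⟩
    calc (q + 2) * (q + 3) ≤ p 2 * (p 2 + 1) := Nat.mul_le_mul (by omega) (by omega)
      _ ≤ P := by
          rw [hPdef]
          exact Finset.single_le_sum (f := fun i => p i * (p i + 1)) (fun i _ => Nat.zero_le _) h2mem
  -- blockmates for w and u
  obtain ⟨Bw, hBwq, hBwadj, hBwcl⟩ := exists_blockmates hmono G hsat v w (Ne.symm hwv) hwnadj
  obtain ⟨Bu, hBuq, hBuadj, hBucl⟩ := exists_blockmates hmono G hsat v u (Ne.symm huv) hunadj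
  have hBwS : Bw ⊆ S := fun b hb => (G.mem_neighborFinset v b).mpr (hBwadj b hb).1
  have hBuS : Bu ⊆ S := fun b hb => (G.mem_neighborFinset v b).mpr (hBuadj b hb).1
  -- the counting argument: δ ≤ q
  have hvS : v ∉ S := by
    intro h; exact G.loopless.irrefl v ((G.mem_neighborFinset v v).mp h)
  set Z : Finset (Fin n) := univ \ insert v S with hZ
  have hδn : δ + 1 ≤ n := by
    have := G.degree_lt_card_verts v
    rw [Fintype.card_fin] at this
    omega
  have hZcard : Z.card = n - (δ + 1) := by
    rw [hZ, Finset.card_sdiff_of_subset (Finset.subset_univ _), Finset.card_univ, Fintype.card_fin,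
      Finset.card_insert_of_notMem hvS]
  set E := ∑ x : Fin n, G.degree x with hE'
  have hEsplit : E = ∑ x ∈ Z, G.degree x + (G.degree v + ∑ y ∈ S, G.degree y) := by
    rw [hE', ← Finset.sum_sdiff (Finset.subset_univ (insert v S)),
      Finset.sum_insert hvS]
  -- F1
  have hF1 : n * δ ≤ E := by
    have := Finset.card_nsmul_le_sum univ (fun x => G.degree x) (G.degree v)
      (fun x _ => hdegmin x)
    rw [Finset.card_univ, Fintype.card_fin, smul_eq_mul] at this
    rw [hδdeg]
    exact this
  -- cross counting
  have hsum_cross : ∑ y ∈ S, G.degree y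
      = ∑ x : Fin n, (S.filter (fun y => G.Adj x y)).card := by
    calc ∑ y ∈ S, G.degree y
        = ∑ y ∈ S, ∑ x : Fin n, (if G.Adj y x then 1 else 0) := by
          apply Finset.sum_congr rfl; intro y _
          rw [← SimpleGraph.card_neighborFinset_eq_degree,
            SimpleGraph.neighborFinset_eq_filter, Finset.card_filter]
      _ = ∑ x : Fin n, ∑ y ∈ S, (if G.Adj y x then 1 else 0) := Finset.sum_comm
      _ = ∑ x : Fin n, (S.filter (fun y => G.Adj x y)).card := by
          apply Finset.sum_congr rfl; intro x _
          rw [Finset.card_filter]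
          apply Finset.sum_congr rfl; intro y _
          exact if_congr (G.adj_comm y x) rfl rfl
  have hcross_split : ∑ x : Fin n, (S.filter (fun y => G.Adj x y)).card
      = ∑ x ∈ Z, (S.filter (fun y => G.Adj x y)).card
        + ((S.filter (fun y => G.Adj v y)).card + ∑ x ∈ S, (S.filter (fun y => G.Adj x y)).card) := by
    rw [← Finset.sum_sdiff (Finset.subset_univ (insert v S)), Finset.sum_insert hvS]
  have hcrossv : (S.filter (fun y => G.Adj v y)).card = δ := by
    rw [Finset.filter_true_of_mem]
    intro y hy; exact (G.mem_neighborFinset v y).mp hy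
  have hqq : q * (q - 1) + q = q * q := by
    cases q with
    | zero => simp
    | succ m => simp [Nat.succ_sub_one]; ring
  have hcrossS : q * (q - 1) ≤ ∑ y ∈ S, (S.filter (fun z => G.Adj y z)).card := by
    calc q * (q - 1) ≤ Bw.card * (Bw.card - 1) := Nat.mul_le_mul hBwq (by omega)
      _ = ∑ _y ∈ Bw, (Bw.card - 1) := by rw [Finset.sum_const, smul_eq_mul]
      _ ≤ ∑ y ∈ Bw, (S.filter (fun z => G.Adj y z)).card := by
          apply Finset.sum_le_sum
          intro y hy
          have hsub : Bw.erase y ⊆ S.filter (fun z => G.Adj y z) := by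
            intro z hz
            rw [Finset.mem_erase] at hz
            rw [Finset.mem_filter]
            exact ⟨hBwS hz.2, hBwcl y hy z hz.2 (Ne.symm hz.1)⟩
          calc Bw.card - 1 = (Bw.erase y).card := (Finset.card_erase_of_mem hy).symm
            _ ≤ _ := Finset.card_le_card hsub
      _ ≤ ∑ y ∈ S, (S.filter (fun z => G.Adj y z)).card :=
          Finset.sum_le_sum_of_subset hBwS
  have hcrossZ : ∀ x ∈ Z, q ≤ (S.filter (fun y => G.Adj x y)).card := by
    intro x hx
    rw [hZ, Finset.mem_sdiff, Finset.mem_insert] at hx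
    push_neg at hx
    obtain ⟨-, hxv, hxS⟩ := hx
    obtain ⟨Bx, hBxq, hBxadj, -⟩ := exists_blockmates hmono G hsat v x
      (Ne.symm hxv) (fun h => hxS ((G.mem_neighborFinset v x).mpr h))
    have hsub : Bx ⊆ S.filter (fun y => G.Adj x y) := fun b hb =>
      Finset.mem_filter.mpr ⟨(G.mem_neighborFinset v b).mpr (hBxadj b hb).1, (hBxadj b hb).2⟩
    calc q ≤ Bx.card := hBxq
      _ ≤ _ := Finset.card_le_card hsub
  have hZcross : Z.card * q ≤ ∑ x ∈ Z, (S.filter (fun y => G.Adj x y)).card := by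
    have := Finset.card_nsmul_le_sum Z _ q hcrossZ
    rwa [smul_eq_mul] at this
  have hZdeg : Z.card * δ ≤ ∑ x ∈ Z, G.degree x := by
    have := Finset.card_nsmul_le_sum Z (fun x => G.degree x) (G.degree v)
      (fun x _ => hdegmin x)
    rw [smul_eq_mul] at this
    rw [hδdeg]
    exact this
  -- F2
  have hF2 : Z.card * δ + (δ + (q * (q-1) + Z.card * q + δ)) ≤ E := by
    rw [hEsplit]
    have h1 : δ + (q * (q-1) + Z.card * q + δ) ≤ G.degree v + ∑ y ∈ S, G.degree y := by
      rw [← hδdeg, hsum_cross, hcross_split, hcrossv]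
      have := Nat.add_le_add (Nat.add_le_add hZcross hcrossS) (le_refl δ)
      omega
    omega
  -- F3
  have hqn : q + 1 ≤ n := by omega
  have hHdeg := Hgraph_deg_sum n t p hqn
  rw [← hq, ← hPdef] at hHdeg
  have hedgeG : G.edgeSet.ncard = G.edgeFinset.card := by
    rw [Set.ncard_eq_toFinset_card']
    exact congrArg Finset.card (by ext; simp)
  have hedgeH : (Hgraph n t p).edgeSet.ncard = (Hgraph n t p).edgeFinset.card := by
    rw [Set.ncard_eq_toFinset_card']
    exact congrArg Finset.card (by ext; simp)
  have hF3 : E + q * (q + 1) ≤ 2 * q * n + P := by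
    have h1 : E = 2 * G.edgeFinset.card := G.sum_degrees_eq_twice_card_edges
    have h2 : (∑ x, (Hgraph n t p).degree x) = 2 * (Hgraph n t p).edgeFinset.card :=
      (Hgraph n t p).sum_degrees_eq_twice_card_edges
    rw [hedgeG, hedgeH] at hE
    omega
  -- conclude δ ≤ q, hence δ = q
  have hqδ : q ≤ δ := le_trans hBwq (Finset.card_le_card hBwS)
  have hδq : δ ≤ q := by
    have zqq : ((q * (q - 1) : ℕ) : ℤ) = (q : ℤ) * q - q := by
      have h := congrArg (fun m : ℕ => (m : ℤ)) hqq
      push_cast at h ⊢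
      linarith
    have hzc : ((Z.card : ℕ) : ℤ) = (n : ℤ) - 1 - (δ : ℤ) := by omega
    have zF2 : ((n : ℤ) - 1 - δ) * δ + (δ + (((q : ℤ) * q - q) + ((n : ℤ) - 1 - δ) * q + δ))
        ≤ (E : ℤ) := by
      have h' : ((Z.card : ℤ)) * δ + (δ + (((q * (q - 1) : ℕ) : ℤ) + (Z.card : ℤ) * q + δ))
          ≤ (E : ℤ) := by exact_mod_cast hF2
      rw [hzc, zqq] at h'
      exact h'
    have hfin := count_arith n q P δ E (by positivity) (by positivity)
      (by exact_mod_cast hδn) (by exact_mod_cast hF1) zF2 (by exact_mod_cast hF3)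
      (by exact_mod_cast hn) (by exact_mod_cast hp6)
    exact_mod_cast hfin
  have hδeq : δ = q := le_antisymm hδq hqδ
  -- Bw = S and Bu = S
  have hBw_eq : Bw = S := Finset.eq_of_subset_of_card_le hBwS (by omega)
  have hBu_eq : Bu = S := Finset.eq_of_subset_of_card_le hBuS (by omega)
  have hSu : ∀ s ∈ S, G.Adj u s := fun s hs => (hBuadj s (by rw [hBu_eq]; exact hs)).2
  have hSw : ∀ s ∈ S, G.Adj w s := fun s hs => (hBwadj s (by rw [hBw_eq]; exact hs)).2
  have hScl : ∀ x ∈ S, ∀ y ∈ S, x ≠ y → G.Adj x y := by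
    intro x hx y hy hxy
    exact hBwcl x (by rw [hBw_eq]; exact hx) y (by rw [hBw_eq]; exact hy) hxy
  have huS : u ∉ S := fun h => hunadj ((G.mem_neighborFinset v u).mp h)
  have hwS : w ∉ S := fun h => hwnadj ((G.mem_neighborFinset v w).mp h)
  -- the clique T
  set T : Finset (Fin n) := insert u (insert w S) with hT
  have hTcard : T.card = p 1 := by
    rw [hT, Finset.card_insert_of_notMem (by simp [huw, huS]),
      Finset.card_insert_of_notMem hwS]
    omega
  have hTcl : ∀ x ∈ T, ∀ y ∈ T, x ≠ y → G.Adj x y := by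
    intro x hx y hy hxy
    simp only [hT, Finset.mem_insert] at hx hy
    rcases hx with rfl | rfl | hx <;> rcases hy with rfl | rfl | hy
    · exact absurd rfl hxy
    · exact hadjuw
    · exact hSu y hy
    · exact G.adj_symm hadjuw
    · exact absurd rfl hxy
    · exact hSw y hy
    · exact G.adj_symm (hSu x hx)
    · exact G.adj_symm (hSw x hx)
    · exact hScl x hx y hy hxy
  have hfT : ∀ a, f a ∉ T := by
    intro a ha
    simp only [hT, Finset.mem_insert] at ha
    rcases ha with h | h | h
    · exact hu' ⟨a, h⟩
    · exact (hfav a) (Set.mem_union_right _ (by simp [h]))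
    · exact (hfav a) (Set.mem_union_left _ ((G.mem_neighborSet v (f a)).mpr
        ((G.mem_neighborFinset v (f a)).mp h)))
  -- build the embedding
  set e0 : Fin (p 1) → Fin n := fun j => ((T.orderIsoOfFin hTcard) j : Fin n) with he0
  have he0T : ∀ j, e0 j ∈ T := fun j => ((T.orderIsoOfFin hTcard) j).2
  have he0inj : Function.Injective e0 := fun a b h =>
    (T.orderIsoOfFin hTcard).injective (Subtype.ext h)
  set F : (Σ i : Fin t, Fin (p ((i : ℕ) + 1))) → Fin n := fun a =>
    if h : (a.1 : ℕ) = 0 then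
      e0 ⟨(a.2 : ℕ), by simpa [h] using a.2.isLt⟩
    else
      f ⟨⟨(a.1 : ℕ) - 1, by have := a.1.isLt; omega⟩,
        ⟨(a.2 : ℕ), by
          have h2 := a.2.isLt
          rw [show (a.1 : ℕ) - 1 + 2 = (a.1 : ℕ) + 1 by omega]
          exact h2⟩⟩ with hF
  have hFinj : Function.Injective F := by
    intro a b hab
    simp only [hF] at hab
    split_ifs at hab with h1 h2 h2
    · have h3 := he0inj hab
      have h4 : (a.2 : ℕ) = (b.2 : ℕ) := congrArg Fin.val h3
      exact sigma_eq_of_vals a b (by omega) h4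
    · exfalso
      have := he0T ⟨(a.2 : ℕ), by simpa [h1] using a.2.isLt⟩
      rw [hab] at this
      exact hfT _ this
    · exfalso
      have := he0T ⟨(b.2 : ℕ), by simpa [h2] using b.2.isLt⟩
      rw [← hab] at this
      exact hfT _ this
    · have h3 := hfinj hab
      have h4 := congrArg
        (fun z : Σ i : Fin (t - 1), Fin (p ((i : ℕ) + 2)) => ((z.1 : ℕ), (z.2 : ℕ))) h3
      simp only at h4
      rw [Prod.mk.injEq] at h4
      exact sigma_eq_of_vals a b (by omega) h4.2
  have hFhom : ∀ a b, (cliqueUnion t p).Adj a b → G.Adj (F a) (F b) := by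
    intro a b hab
    obtain ⟨hne', hfst⟩ := hab
    have hfstv : (a.1 : ℕ) = (b.1 : ℕ) := congrArg Fin.val hfst
    simp only [hF]
    split_ifs with h1 h2 h2
    · apply hTcl _ (he0T _) _ (he0T _)
      intro hcontra
      have h3 := he0inj hcontra
      exact hne' (sigma_eq_of_vals a b (by omega) (congrArg Fin.val h3))
    · omega
    · omega
    · apply hfhom
      refine ⟨?_, ?_⟩
      · intro hcontra
        have h4 := congrArg
          (fun z : Σ i : Fin (t - 1), Fin (p ((i : ℕ) + 2)) => ((z.1 : ℕ), (z.2 : ℕ))) hcontra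
        simp only at h4
        rw [Prod.mk.injEq] at h4
        exact hne' (sigma_eq_of_vals a b (by omega) h4.2)
      · exact Fin.ext (show (a.1 : ℕ) - 1 = (b.1 : ℕ) - 1 by omega)
  exact hsat.1 ⟨F, hFinj, hFhom⟩
end

section
/- H(n; p, q, q, ..., q) (with t-1 copies of q) is a (K_p ∪ (t-1)K_q)-saturated graph for every t ≥ 2 and 2 ≤ p < q and sufficiently large n. -/
open SimpleGraph Finset

section
variable (p q : ℕ)

lemma bs_eq (i : ℕ) :
    blockStart (fun k => if k = 1 then p else q) i = (p - 2) + (i - 2) * (q + 1) := by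
  unfold blockStart
  simp only [if_pos rfl]
  congr 1
  have h1 : ∑ j ∈ Finset.Ico 2 i, ((if j = 1 then p else q) + 1)
      = ∑ _j ∈ Finset.Ico 2 i, (q + 1) := by
    refine Finset.sum_congr rfl (fun j hj => ?_)
    have : j ≠ 1 := by have := (Finset.mem_Ico.1 hj).1; omega
    simp [this]
  rw [h1, Finset.sum_const, Nat.card_Ico, smul_eq_mul]

lemma bs_mono {i j : ℕ} (h : i ≤ j) :
    blockStart (fun k => if k = 1 then p else q) i ≤ blockStart (fun k => if k = 1 then p else q) j := by
  rw [bs_eq, bs_eq]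
  have : i - 2 ≤ j - 2 := by omega
  nlinarith [this]

lemma inBlock_iff {b : ℕ} (hb : 2 ≤ b) (a : ℕ) :
    inBlock (fun k => if k = 1 then p else q) b a ↔
      blockStart (fun k => if k = 1 then p else q) b ≤ a ∧
        a < blockStart (fun k => if k = 1 then p else q) b + (q + 1) := by
  unfold inBlock
  have : b ≠ 1 := by omega
  simp [this]

lemma block_disj {b b' a : ℕ} (hb : 2 ≤ b) (hb' : 2 ≤ b')
    (h : inBlock (fun k => if k = 1 then p else q) b a)
    (h' : inBlock (fun k => if k = 1 then p else q) b' a) : b = b' := by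
  rw [inBlock_iff p q hb] at h
  rw [inBlock_iff p q hb'] at h'
  by_contra hne
  rcases Nat.lt_or_ge b b' with hlt | hge
  · have := bs_mono p q (show b + 1 ≤ b' by omega)
    rw [bs_eq, bs_eq] at this
    rw [bs_eq] at h h'
    have hx : (b + 1 - 2) * (q+1) = (b-2) * (q+1) + (q+1) := by
      have : b + 1 - 2 = (b - 2) + 1 := by omega
      rw [this]; ring
    omega
  · have hlt : b' < b := by omega
    have := bs_mono p q (show b' + 1 ≤ b by omega)
    rw [bs_eq, bs_eq] at this
    rw [bs_eq] at h h'
    have hx : (b' + 1 - 2) * (q+1) = (b'-2) * (q+1) + (q+1) := by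
      have : b' + 1 - 2 = (b' - 2) + 1 := by omega
      rw [this]; ring
    omega

end

section
variable (p q n t : ℕ)

lemma Hgraph_adj {x y : Fin n} :
    (Hgraph n t (fun k => if k = 1 then p else q)).Adj x y ↔ x ≠ y ∧
      ((x:ℕ) < p - 2 ∨ (y:ℕ) < p - 2 ∨ ∃ b, 2 ≤ b ∧ b ≤ t ∧
        inBlock (fun k => if k = 1 then p else q) b (x:ℕ) ∧
        inBlock (fun k => if k = 1 then p else q) b (y:ℕ)) := by
  unfold Hgraph
  rw [SimpleGraph.fromRel_adj]
  have hP1 : (fun k => if k = 1 then p else q) 1 = p := by simp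
  constructor
  · rintro ⟨hne, (h | ⟨b, hb1, hb2, hx, hy⟩) | (h | ⟨b, hb1, hb2, hy, hx⟩)⟩
    · exact ⟨hne, Or.inl (by rw [hP1] at h; exact h)⟩
    · exact ⟨hne, Or.inr (Or.inr ⟨b, hb1, hb2, hx, hy⟩)⟩
    · exact ⟨hne, Or.inr (Or.inl (by rw [hP1] at h; exact h))⟩
    · exact ⟨hne, Or.inr (Or.inr ⟨b, hb1, hb2, hx, hy⟩)⟩
  · rintro ⟨hne, h | h | ⟨b, hb1, hb2, hx, hy⟩⟩
    · exact ⟨hne, Or.inl (Or.inl (by rw [hP1]; exact h))⟩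
    · exact ⟨hne, Or.inr (Or.inl (by rw [hP1]; exact h))⟩
    · exact ⟨hne, Or.inl (Or.inr ⟨b, hb1, hb2, hx, hy⟩)⟩

lemma bs_succ {b : ℕ} (hb : 2 ≤ b) :
    blockStart (fun k => if k = 1 then p else q) (b + 1)
      = blockStart (fun k => if k = 1 then p else q) b + (q + 1) := by
  rw [bs_eq, bs_eq]
  have h : b + 1 - 2 = (b - 2) + 1 := by omega
  rw [h]; ring

lemma bs_two : blockStart (fun k => if k = 1 then p else q) 2 = p - 2 := by
  rw [bs_eq]; simp

end

lemma part2 (n t p q : ℕ) (ht : 2 ≤ t) (hp : 2 ≤ p) (hpq : p < q)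
    (hfit : blockStart (fun k => if k = 1 then p else q) (t + 1) + 1 ≤ n)
    (u v : Fin n) (huv : u ≠ v)
    (h1 : p - 2 ≤ (u:ℕ)) (h2 : p - 2 ≤ (v:ℕ))
    (h3 : ∀ b, 2 ≤ b → b ≤ t →
      ¬(inBlock (fun k => if k = 1 then p else q) b (u:ℕ) ∧
        inBlock (fun k => if k = 1 then p else q) b (v:ℕ))) :
    IsSubgraphOf (cliqueUnion t (fun k => if k = 1 then p else q))
      ((Hgraph n t (fun k => if k = 1 then p else q)) ⊔ SimpleGraph.fromEdgeSet {s(u, v)}) := by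
  have huv' : (u:ℕ) ≠ (v:ℕ) := fun h => huv (Fin.ext h)
  have hp2n : p - 2 < n := by
    have h := bs_mono p q (show 2 ≤ t + 1 by omega)
    rw [bs_two] at h
    omega
  have hblk_lt : ∀ i : ℕ, 1 ≤ i → i < t →
      blockStart (fun k => if k = 1 then p else q) (i+1) + q + 1 ≤ n := by
    intro i hi1 hit
    have h := bs_mono p q (show (i + 1) + 1 ≤ t + 1 by omega)
    have h2 := bs_succ p q (show 2 ≤ i + 1 by omega)
    omega
  set F : ℕ → ℕ → ℕ := fun i j =>
    if i = 0 then (if j < p - 2 then j else if j = p - 2 then (u:ℕ) else (v:ℕ))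
    else (if blockStart (fun k => if k = 1 then p else q) (i+1) + j = (u:ℕ) ∨
              blockStart (fun k => if k = 1 then p else q) (i+1) + j = (v:ℕ)
          then blockStart (fun k => if k = 1 then p else q) (i+1) + q
          else blockStart (fun k => if k = 1 then p else q) (i+1) + j) with hF
  have hFlt : ∀ i j, i < t → j < (if i + 1 = 1 then p else q) → F i j < n := by
    intro i j hit hj
    by_cases hi : i = 0
    · subst hi
      simp only [hF, if_pos rfl]
      split
      · omega
      · split
        · exact u.isLt
        · exact v.isLt
    · have hj' : j < q := by simpa [show i ≠ 0 by omega] using hj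
      have := hblk_lt i (by omega) hit
      simp only [hF, if_neg hi]
      split <;> omega
  have hF0 : ∀ j, F 0 j < p - 2 ∨ F 0 j = (u:ℕ) ∨ F 0 j = (v:ℕ) := by
    intro j
    simp only [hF, if_pos rfl]
    split
    · left; assumption
    · split
      · right; left; rfl
      · right; right; rfl
  have hFblk : ∀ i j, 1 ≤ i → j < q →
      blockStart (fun k => if k = 1 then p else q) (i+1) ≤ F i j ∧
      F i j ≤ blockStart (fun k => if k = 1 then p else q) (i+1) + q := by
    intro i j hi hj
    simp only [hF, if_neg (show i ≠ 0 by omega)]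
    split <;> omega
  have hFne : ∀ i j, 1 ≤ i → i < t → j < q → F i j ≠ (u:ℕ) ∧ F i j ≠ (v:ℕ) := by
    intro i j hi hit hj
    have h3' := h3 (i+1) (by omega) (by omega)
    have hib := inBlock_iff p q (show 2 ≤ i + 1 by omega)
    simp only [hF, if_neg (show i ≠ 0 by omega)]
    split
    · rename_i hhit
      constructor
      · intro he
        rcases hhit with hu | hv
        · omega
        · exact h3' ⟨(hib _).2 ⟨by omega, by omega⟩, (hib _).2 ⟨by omega, by omega⟩⟩
      · intro he
        rcases hhit with hu | hv
        · exact h3' ⟨(hib _).2 ⟨by omega, by omega⟩, (hib _).2 ⟨by omega, by omega⟩⟩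
        · omega
    · rename_i hhit
      push_neg at hhit
      exact hhit
  have hFinj : ∀ i j i' j', i < t → i' < t → j < (if i + 1 = 1 then p else q) →
      j' < (if i' + 1 = 1 then p else q) → F i j = F i' j' → i = i' ∧ j = j' := by
    intro i j i' j' hit hit' hj hj' heq
    by_cases hi : i = 0 <;> by_cases hi' : i' = 0
    · subst hi; subst hi'
      refine ⟨rfl, ?_⟩
      have hjp : j < p := by simpa using hj
      have hjp' : j' < p := by simpa using hj'
      simp only [hF, if_pos rfl] at heq
      split_ifs at heq <;> omega
    · exfalso
      subst hi
      have hj2 : j' < q := by simpa [show i' ≠ 0 by omega] using hj'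
      have hb := hFblk i' j' (by omega) hj2
      have hbne := hFne i' j' (by omega) hit' hj2
      have hmono := bs_mono p q (show 2 ≤ i' + 1 by omega)
      rw [bs_two] at hmono
      rcases hF0 j with h | h | h <;> omega
    · exfalso
      subst hi'
      have hj2 : j < q := by simpa [show i ≠ 0 by omega] using hj
      have hb := hFblk i j (by omega) hj2
      have hbne := hFne i j (by omega) hit hj2
      have hmono := bs_mono p q (show 2 ≤ i + 1 by omega)
      rw [bs_two] at hmono
      rcases hF0 j' with h | h | h <;> omega
    · have hj2 : j < q := by simpa [show i ≠ 0 by omega] using hj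
      have hj2' : j' < q := by simpa [show i' ≠ 0 by omega] using hj'
      by_cases hii : i = i'
      · subst hii
        refine ⟨rfl, ?_⟩
        have h3' := h3 (i+1) (by omega) (by omega)
        have hib := inBlock_iff p q (show 2 ≤ i + 1 by omega)
        simp only [hF, if_neg (show i ≠ 0 by omega)] at heq
        split_ifs at heq with ha hb hb
        · rcases ha with ha | ha <;> rcases hb with hb | hb
          · omega
          · exact absurd ⟨(hib _).2 ⟨by omega, by omega⟩, (hib _).2 ⟨by omega, by omega⟩⟩ h3'
          · exact absurd ⟨(hib _).2 ⟨by omega, by omega⟩, (hib _).2 ⟨by omega, by omega⟩⟩ h3'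
          · omega
        · omega
        · omega
        · omega
      · exfalso
        have hb1 := hFblk i j (by omega) hj2
        have hb2 := hFblk i' j' (by omega) hj2'
        have hib1 := inBlock_iff p q (show 2 ≤ i + 1 by omega)
        have hib2 := inBlock_iff p q (show 2 ≤ i' + 1 by omega)
        have := block_disj p q (show 2 ≤ i + 1 by omega) (show 2 ≤ i' + 1 by omega)
          ((hib1 (F i j)).2 ⟨by omega, by omega⟩)
          ((hib2 (F i j)).2 ⟨by omega, by omega⟩)
        omega
  refine ⟨fun a => ⟨F a.1.1 a.2.1, hFlt _ _ a.1.2 a.2.2⟩, ?_, ?_⟩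
  · rintro ⟨⟨i, hi⟩, j⟩ ⟨⟨i', hi'⟩, j'⟩ hab
    simp only [Fin.mk.injEq] at hab
    obtain ⟨hii, hjj⟩ := hFinj i j.1 i' j'.1 hi hi' j.isLt j'.isLt hab
    subst hii
    have : j = j' := Fin.ext hjj
    subst this
    rfl
  · rintro ⟨⟨i, hi⟩, j⟩ ⟨⟨i', hi'⟩, j'⟩ hadj'
    obtain ⟨hne, hfst⟩ := (hadj' : _ ≠ _ ∧ (⟨i, hi⟩ : Fin t) = ⟨i', hi'⟩)
    simp only [Fin.mk.injEq] at hfst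
    subst hfst
    have hjne : j ≠ j' := by
      intro h; exact hne (by rw [h])
    have hjne' : (j:ℕ) ≠ (j':ℕ) := fun h => hjne (Fin.ext h)
    have hFne2 : F i j.1 ≠ F i j'.1 := by
      intro h
      exact hjne' (hFinj i j.1 i j'.1 hi hi j.isLt j'.isLt h).2
    have hfinne : (⟨F i j.1, hFlt _ _ hi j.isLt⟩ : Fin n) ≠ ⟨F i j'.1, hFlt _ _ hi j'.isLt⟩ :=
      fun h => hFne2 (congrArg Fin.val h)
    rw [SimpleGraph.sup_adj]
    by_cases hi0 : i = 0
    · subst hi0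
      rcases hF0 j.1 with h | h | h
      · exact Or.inl ((Hgraph_adj p q n t).2 ⟨hfinne, Or.inl h⟩)
      · rcases hF0 j'.1 with h' | h' | h'
        · exact Or.inl ((Hgraph_adj p q n t).2 ⟨hfinne, Or.inr (Or.inl h')⟩)
        · exact absurd (h.trans h'.symm) hFne2
        · refine Or.inr ?_
          rw [SimpleGraph.fromEdgeSet_adj]
          refine ⟨?_, hfinne⟩
          simp only [Set.mem_singleton_iff, Sym2.eq_iff]
          exact Or.inl ⟨Fin.ext h, Fin.ext h'⟩
      · rcases hF0 j'.1 with h' | h' | h'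
        · exact Or.inl ((Hgraph_adj p q n t).2 ⟨hfinne, Or.inr (Or.inl h')⟩)
        · refine Or.inr ?_
          rw [SimpleGraph.fromEdgeSet_adj]
          refine ⟨?_, hfinne⟩
          simp only [Set.mem_singleton_iff, Sym2.eq_iff]
          exact Or.inr ⟨Fin.ext h, Fin.ext h'⟩
        · exact absurd (h.trans h'.symm) hFne2
    · have hjq : (j:ℕ) < q := by
        have := j.isLt; simpa [show i ≠ 0 by omega] using this
      have hjq' : (j':ℕ) < q := by
        have := j'.isLt; simpa [show i ≠ 0 by omega] using this
      have hb1 := hFblk i j.1 (by omega) hjq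
      have hb2 := hFblk i j'.1 (by omega) hjq'
      have hib := inBlock_iff p q (show 2 ≤ i + 1 by omega)
      exact Or.inl ((Hgraph_adj p q n t).2 ⟨hfinne, Or.inr (Or.inr
        ⟨i + 1, by omega, by omega, (hib (F i j.1)).2 ⟨by omega, by omega⟩,
          (hib (F i j'.1)).2 ⟨by omega, by omega⟩⟩)⟩)

lemma part1 (n t p q : ℕ) (ht : 2 ≤ t) (hp : 2 ≤ p) (hpq : p < q) :
    ¬ IsSubgraphOf (cliqueUnion t (fun k => if k = 1 then p else q))
      (Hgraph n t (fun k => if k = 1 then p else q)) := by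
  rintro ⟨f, finj, fadj⟩
  have fsnd : ∀ (i : Fin t) (j j' : Fin (if (i:ℕ) + 1 = 1 then p else q)),
      f ⟨i, j⟩ = f ⟨i, j'⟩ → j = j' := by
    intro i j j' h
    have := finj h
    simpa using this
  have hmk_ne : ∀ (i : Fin t) (j j' : Fin (if (i:ℕ) + 1 = 1 then p else q)), j ≠ j' →
      (cliqueUnion t (fun k => if k = 1 then p else q)).Adj ⟨i, j⟩ ⟨i, j'⟩ := by
    intro i j j' hne
    exact (show (⟨i, j⟩ : Σ i : Fin t, Fin (if (i:ℕ) + 1 = 1 then p else q)) ≠ ⟨i, j'⟩ ∧ i = i from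
      ⟨fun h => hne (by simpa using h), rfl⟩)
  have hmsize : ∀ i : Fin t, p ≤ (if (i:ℕ) + 1 = 1 then p else q) := by
    intro i; split <;> omega
  have key : ∀ i : Fin t, ∃ b, 2 ≤ b ∧ b ≤ t ∧ ∀ j,
      p - 2 ≤ (f ⟨i, j⟩ : ℕ) → inBlock (fun k => if k = 1 then p else q) b (f ⟨i, j⟩ : ℕ) := by
    intro i
    have hT : (Finset.univ.filter (fun j : Fin (if (i:ℕ) + 1 = 1 then p else q) =>
        (f ⟨i, j⟩ : ℕ) < p - 2)).card ≤ p - 2 := by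
      have h := Finset.card_le_card_of_injOn
        (s := Finset.univ.filter (fun j : Fin (if (i:ℕ) + 1 = 1 then p else q) =>
          (f ⟨i, j⟩ : ℕ) < p - 2))
        (t := Finset.range (p - 2))
        (fun j => (f ⟨i, j⟩ : ℕ))
        (fun j hj => Finset.mem_range.2 (Finset.mem_filter.1 hj).2)
        (fun j _ j' _ h => fsnd i j j' (Fin.ext h))
      simpa using h
    have hScard : 1 < (Finset.univ.filter
        (fun j : Fin (if (i:ℕ) + 1 = 1 then p else q) =>
          ¬ ((f ⟨i, j⟩ : ℕ) < p - 2))).card := by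
      have hsum := Finset.card_filter_add_card_filter_not
        (s := (Finset.univ : Finset (Fin (if (i:ℕ) + 1 = 1 then p else q))))
        (p := fun j => (f ⟨i, j⟩ : ℕ) < p - 2)
      have hcu : (Finset.univ : Finset (Fin (if (i:ℕ) + 1 = 1 then p else q))).card
          = (if (i:ℕ) + 1 = 1 then p else q) := by
        simp
      have := hmsize i
      omega
    obtain ⟨j1, hj1, j2, hj2, hj12⟩ := Finset.one_lt_card.1 hScard
    simp only [Finset.mem_filter] at hj1 hj2
    have hadj := fadj _ _ (hmk_ne i j1 j2 hj12)
    rw [Hgraph_adj] at hadj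
    obtain ⟨-, h | h | ⟨b, hb2, hbt, hx, hy⟩⟩ := hadj
    · omega
    · omega
    · refine ⟨b, hb2, hbt, fun j hj => ?_⟩
      by_cases hjj : j = j1
      · subst hjj; exact hx
      · have hadj2 := fadj _ _ (hmk_ne i j j1 hjj)
        rw [Hgraph_adj] at hadj2
        obtain ⟨-, h' | h' | ⟨b', hb2', hbt', hx', hy'⟩⟩ := hadj2
        · omega
        · omega
        · rwa [block_disj p q hb2' hb2 hy' hx] at hx'
  choose β hβ2 hβt hβin using key
  have hpig : ∃ i ∈ (Finset.univ : Finset (Fin t)), ∃ i' ∈ (Finset.univ : Finset (Fin t)),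
      i ≠ i' ∧ β i = β i' := by
    apply Finset.exists_ne_map_eq_of_card_lt_of_maps_to (t := Finset.Ico 2 (t + 1))
    · simp [Nat.card_Ico]
      omega
    · intro i _
      exact Finset.mem_Ico.2 ⟨hβ2 i, by have := hβt i; omega⟩
  obtain ⟨i, -, i', -, hne, hββ⟩ := hpig
  set b := β i with hb
  have himg : ∀ (k : Fin t), β k = b → Finset.univ.image (fun j => (f ⟨k, j⟩ : ℕ)) ⊆
      Finset.range (p - 2) ∪ Finset.Ico (blockStart (fun x => if x = 1 then p else q) b)
        (blockStart (fun x => if x = 1 then p else q) b + (q + 1)) := by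
    intro k hk x hx
    simp only [Finset.mem_image] at hx
    obtain ⟨j, -, rfl⟩ := hx
    rcases Nat.lt_or_ge (f ⟨k, j⟩ : ℕ) (p - 2) with h | h
    · exact Finset.mem_union_left _ (Finset.mem_range.2 h)
    · have := hβin k j h
      rw [hk] at this
      rw [inBlock_iff p q (show 2 ≤ b by rw [hb]; exact hβ2 i)] at this
      exact Finset.mem_union_right _ (Finset.mem_Ico.2 this)
  have hcard : ∀ (k : Fin t), (Finset.univ.image (fun j => (f ⟨k, j⟩ : ℕ))).card
      = (if (k:ℕ) + 1 = 1 then p else q) := by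
    intro k
    rw [Finset.card_image_of_injOn, Finset.card_univ, Fintype.card_fin]
    intro j _ j' _ h
    exact fsnd k j j' (Fin.ext h)
  have hdisj : Disjoint (Finset.univ.image (fun j => (f ⟨i, j⟩ : ℕ)))
      (Finset.univ.image (fun j => (f ⟨i', j⟩ : ℕ))) := by
    rw [Finset.disjoint_left]
    intro x hx hx'
    simp only [Finset.mem_image] at hx hx'
    obtain ⟨j, -, hj⟩ := hx
    obtain ⟨j', -, hj'⟩ := hx'
    have : f ⟨i, j⟩ = f ⟨i', j'⟩ := Fin.ext (hj.trans hj'.symm)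
    have := congrArg Sigma.fst (finj this)
    exact hne this
  have hsub := Finset.union_subset (himg i rfl) (himg i' hββ.symm)
  have hle := Finset.card_le_card hsub
  rw [Finset.card_union_of_disjoint hdisj, hcard i, hcard i'] at hle
  have hTle := Finset.card_union_le (Finset.range (p - 2))
    (Finset.Ico (blockStart (fun x => if x = 1 then p else q) b)
      (blockStart (fun x => if x = 1 then p else q) b + (q + 1)))
  rw [Finset.card_range, Nat.card_Ico] at hTle
  have hsizes : p + q ≤ (if (i:ℕ) + 1 = 1 then p else q) + (if (i':ℕ) + 1 = 1 then p else q) := by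
    have hne' : (i:ℕ) ≠ (i':ℕ) := fun h => hne (Fin.ext h)
    split_ifs <;> omega
  omega

/-- `H(n; p, q, …, q)` is `(K_p ∪ (t-1)K_q)`-saturated for `t ≥ 2`, `2 ≤ p < q`. -/
theorem Hgraph_pqq_saturated (n t : ℕ) (p q : ℕ) (ht : 2 ≤ t) (hp : 2 ≤ p)
    (hpq : p < q)
    (hfit : blockStart (fun i => if i = 1 then p else q) (t + 1) + 1 ≤ n) :
    IsSat (Hgraph n t (fun i => if i = 1 then p else q))
      (cliqueUnion t (fun i => if i = 1 then p else q)) := by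
  refine ⟨part1 n t p q ht hp hpq, fun u v huv hadj => ?_⟩
  have hfacts : ¬ ((u:ℕ) < p - 2 ∨ (v:ℕ) < p - 2 ∨ ∃ b, 2 ≤ b ∧ b ≤ t ∧
      inBlock (fun k => if k = 1 then p else q) b (u:ℕ) ∧
      inBlock (fun k => if k = 1 then p else q) b (v:ℕ)) :=
    fun h => hadj ((Hgraph_adj p q n t).2 ⟨huv, h⟩)
  push_neg at hfacts
  obtain ⟨h1, h2, h3⟩ := hfacts
  exact part2 n t p q ht hp hpq hfit u v huv h1 h2
    (fun b hb hbt hc => h3 b hb hbt hc.1 hc.2)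
end

section
/- Let 4 ≤ p_1 ≤ p_2 and p_3 - p_2 ≥ p_1. Let G* be a graph containing a spanning subgraph H = H_1 ∨ (H_2 ∪ H_3 ∪ H_4) where H_1 ≅ K_{p_1-2}, H_2 ≅ K_{p_2}, H_3 ≅ K_{p_3}, and H_4 is an empty graph on the remaining vertices. Assume K_{p_1} ∪ K_{p_2} ∪ K_{p_3} is not a subgraph of G*, there is a vertex v ∈ V(H_4) with N_{G*}(v) = V(H_1), and for every w' ∉ V(H_1) ∪ {v}, G* + vw' contains a subgraph isomorphic to K_{p_1} ∪ K_{p_2} ∪ K_{p_3}. Then the number of edges of G* with both endpoints outside V(H_1) is at least C(p_2+1, 2) + C(p_3+1, 2). -/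
open SimpleGraph Finset

set_option linter.unusedSectionVars false
set_option linter.unusedVariables false
set_option maxHeartbeats 1000000

section AuxClaim
open SimpleGraph Finset

lemma two_mul_choose_two (n : ℕ) : 2 * n.choose 2 = n * (n - 1) := by
  rw [Nat.choose_two_right]
  have h : 2 ∣ n * (n - 1) := by
    rcases Nat.even_or_odd n with h | h
    · exact Dvd.dvd.mul_right h.two_dvd _
    · rcases n with _ | m
      · simp
      · exact Dvd.dvd.mul_left (by simpa using (Nat.Odd.sub_odd h odd_one).two_dvd) _
  omega

lemma cstep (n : ℕ) : (n + 1).choose 2 = n.choose 2 + n := by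
  simp [Nat.choose_succ_succ, Nat.choose_one_right, Nat.add_comm]

lemma choose2_major {k t K s : ℕ} (hk : k ≤ K) (ht : t ≤ K) (hs : k + t ≤ K + s) :
    k.choose 2 + t.choose 2 ≤ K.choose 2 + s.choose 2 := by
  rcases le_or_gt k s with h | h
  · have h1 := Nat.choose_le_choose 2 h
    have h2 := Nat.choose_le_choose 2 ht
    omega
  rcases le_or_gt t s with h' | h'
  · have h1 := Nat.choose_le_choose 2 hk
    have h2 := Nat.choose_le_choose 2 h'
    omega
  suffices hh : 2 * k.choose 2 + 2 * t.choose 2 ≤ 2 * K.choose 2 + 2 * s.choose 2 by omega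
  rw [two_mul_choose_two, two_mul_choose_two, two_mul_choose_two, two_mul_choose_two]
  rcases k with _ | k'; · omega
  rcases t with _ | t'; · omega
  rcases K with _ | K'; · omega
  simp only [Nat.add_sub_cancel]
  rcases s with _ | s''
  · have h1 : (k' + t' + 1) * (k' + t') ≤ (K' + 1) * K' :=
      Nat.mul_le_mul (by omega) (by omega)
    nlinarith [h1, Nat.zero_le (k' * t')]
  · simp only [Nat.add_sub_cancel]
    have hks : s'' + 1 ≤ k' := by omega
    have hts : s'' + 1 ≤ t' := by omega
    have hsum : k' + t' ≤ K' + s'' + 1 := by omega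
    zify at *
    nlinarith [mul_nonneg (show (0:ℤ) ≤ K' + s'' + 1 - k' - t' by omega)
        (show (0:ℤ) ≤ k' + t' - s'' by omega),
      mul_nonneg (show (0:ℤ) ≤ t' - s'' by omega) (show (0:ℤ) ≤ k' - s'' by omega),
      sq_nonneg ((K':ℤ) + s'' + 1 - k' - t'),
      (show (0:ℤ) ≤ K' + s'' + 1 - k' - t' by omega)]

lemma csuper (m n : ℕ) : m.choose 2 + n.choose 2 ≤ (m + n).choose 2 := by
  have := choose2_major (k := m) (t := n) (K := m + n) (s := 0)
    (by omega) (by omega) (by omega)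
  simpa using this

lemma bonf {α : Type*} [DecidableEq α] (A B C D : Finset α) :
    A.card + B.card + C.card + D.card ≤ (A ∪ B ∪ C ∪ D).card +
      ((A ∩ B).card + (A ∩ C).card + (A ∩ D).card + (B ∩ C).card + (B ∩ D).card +
        (C ∩ D).card) := by
  have h1 := Finset.card_union_add_card_inter A B
  have h2 := Finset.card_union_add_card_inter (A ∪ B) C
  have h3 := Finset.card_union_add_card_inter (A ∪ B ∪ C) D
  have h4 : ((A ∪ B) ∩ C).card ≤ (A ∩ C).card + (B ∩ C).card := by
    rw [Finset.union_inter_distrib_right]; exact Finset.card_union_le _ _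
  have h5 : ((A ∪ B ∪ C) ∩ D).card ≤ (A ∩ D).card + (B ∩ D).card + (C ∩ D).card := by
    rw [Finset.union_inter_distrib_right, Finset.union_inter_distrib_right]
    exact le_trans (Finset.card_union_le _ _)
      (Nat.add_le_add_right (Finset.card_union_le _ _) _)
  omega

variable {V : Type*} [DecidableEq V]

/-- nondiagonal pairs within `s`. -/
def ES (s : Finset V) : Finset (Sym2 V) := s.sym2.filter (fun e => ¬ e.IsDiag)

lemma card_ES (s : Finset V) : (ES s).card = s.card.choose 2 := by
  have hsplit := Finset.card_filter_add_card_filter_not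
    (s := s.sym2) (p := fun e : Sym2 V => e.IsDiag)
  have hdiag : (s.sym2.filter (fun e : Sym2 V => e.IsDiag)) = s.image Sym2.diag := by
    ext e
    induction e using Sym2.ind with
    | _ x y =>
      simp only [Finset.mem_filter, Finset.mk_mem_sym2_iff, Sym2.mk_isDiag_iff,
        Finset.mem_image]
      constructor
      · rintro ⟨⟨hx, hy⟩, rfl⟩; exact ⟨x, hx, rfl⟩
      · rintro ⟨a, ha, he⟩
        have h2 := (Sym2.eq_iff).mp ((by rw [Sym2.diag] at he; exact he) :
          s(a, a) = s(x, y))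
        have : x = a ∧ y = a := by tauto
        rcases this with ⟨rfl, rfl⟩; exact ⟨⟨ha, ha⟩, rfl⟩
  rw [hdiag, Finset.card_image_of_injective _ Sym2.diag_injective] at hsplit
  have hs2 := Finset.card_sym2 s
  have hc := cstep s.card
  unfold ES
  omega

lemma ES_inter (s t : Finset V) : ES s ∩ ES t = ES (s ∩ t) := by
  ext e
  induction e using Sym2.ind with
  | _ x y =>
    simp only [ES, Finset.mem_inter, Finset.mem_filter, Finset.mk_mem_sym2_iff]
    tauto

lemma card_ES_inter (s t : Finset V) : (ES s ∩ ES t).card = (s ∩ t).card.choose 2 := by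
  rw [ES_inter, card_ES]

lemma finish4 [Fintype V] (Gs : SimpleGraph V) (S1 : Set V) (s t u w : Finset V)
    (hs : ∀ x ∈ s, ∀ y ∈ s, x ≠ y → Gs.Adj x y) (hso : ∀ x ∈ s, x ∉ S1)
    (ht : ∀ x ∈ t, ∀ y ∈ t, x ≠ y → Gs.Adj x y) (hto : ∀ x ∈ t, x ∉ S1)
    (hu : ∀ x ∈ u, ∀ y ∈ u, x ≠ y → Gs.Adj x y) (huo : ∀ x ∈ u, x ∉ S1)
    (hw : ∀ x ∈ w, ∀ y ∈ w, x ≠ y → Gs.Adj x y) (hwo : ∀ x ∈ w, x ∉ S1) :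
    s.card.choose 2 + t.card.choose 2 + u.card.choose 2 + w.card.choose 2 ≤
      (Gs.induce S1ᶜ).edgeSet.ncard +
      ((s ∩ t).card.choose 2 + (s ∩ u).card.choose 2 + (s ∩ w).card.choose 2 +
        (t ∩ u).card.choose 2 + (t ∩ w).card.choose 2 + (u ∩ w).card.choose 2) := by
  classical
  have hb := bonf (ES s) (ES t) (ES u) (ES w)
  rw [card_ES, card_ES, card_ES, card_ES, card_ES_inter, card_ES_inter, card_ES_inter,
    card_ES_inter, card_ES_inter, card_ES_inter] at hb
  have hsub : ∀ (x : Finset V), (∀ a ∈ x, ∀ b ∈ x, a ≠ b → Gs.Adj a b) →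
      (∀ a ∈ x, a ∉ S1) → ∀ e ∈ ES x,
      e ∈ Sym2.map (Subtype.val : (S1ᶜ : Set V) → V) '' (Gs.induce S1ᶜ).edgeSet := by
    intro x hcl ho e he
    induction e using Sym2.ind with
    | _ a b =>
      simp only [ES, Finset.mem_filter, Finset.mk_mem_sym2_iff, Sym2.mk_isDiag_iff] at he
      obtain ⟨⟨ha, hb'⟩, hne⟩ := he
      have hadj : Gs.Adj a b := hcl a ha b hb' hne
      refine ⟨s(⟨a, by simp [ho a ha]⟩, ⟨b, by simp [ho b hb']⟩), ?_, by simp⟩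
      rw [SimpleGraph.mem_edgeSet]
      exact hadj
  have hcard : ((ES s ∪ ES t ∪ ES u ∪ ES w).card : ℕ) ≤ (Gs.induce S1ᶜ).edgeSet.ncard := by
    have himg : ((ES s ∪ ES t ∪ ES u ∪ ES w : Finset (Sym2 V)) : Set (Sym2 V)) ⊆
        Sym2.map (Subtype.val : (S1ᶜ : Set V) → V) '' (Gs.induce S1ᶜ).edgeSet := by
      intro e he
      simp only [Finset.coe_union, Set.mem_union, Finset.mem_coe] at he
      rcases he with ((h | h) | h) | h
      · exact hsub s hs hso e h
      · exact hsub t ht hto e h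
      · exact hsub u hu huo e h
      · exact hsub w hw hwo e h
    calc ((ES s ∪ ES t ∪ ES u ∪ ES w).card : ℕ)
        = ((ES s ∪ ES t ∪ ES u ∪ ES w : Finset (Sym2 V)) : Set (Sym2 V)).ncard :=
          (Set.ncard_coe_finset _).symm
      _ ≤ (Sym2.map (Subtype.val : (S1ᶜ : Set V) → V) '' (Gs.induce S1ᶜ).edgeSet).ncard :=
          Set.ncard_le_ncard himg (Set.toFinite _)
      _ = (Gs.induce S1ᶜ).edgeSet.ncard :=
          Set.ncard_image_of_injective _ (Sym2.map.injective Subtype.val_injective)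
  omega

section Leaves
variable {V : Type*} [Fintype V] [DecidableEq V] (Gs : SimpleGraph V) (S1 : Set V)

lemma pairbound (X P Q : Finset V) (h : Disjoint P Q) :
    (X ∩ P).card + (X ∩ Q).card ≤ X.card := by
  rw [← Finset.card_union_of_disjoint
    (h.mono Finset.inter_subset_right Finset.inter_subset_right)]
  exact Finset.card_le_card (by
    intro z hz
    simp only [Finset.mem_union, Finset.mem_inter] at hz
    tauto)

lemma card_inter_zero (P Q : Finset V) (h : Disjoint P Q) : (P ∩ Q).card = 0 := by
  simp [Finset.disjoint_iff_inter_eq_empty.mp h]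

lemma leafBeta (a b : ℕ) (ha : 4 ≤ a) (hab : a + 4 ≤ b)
    (A1 B1 A2 B2 : Finset V)
    (hA1 : ∀ x ∈ A1, ∀ y ∈ A1, x ≠ y → Gs.Adj x y) (hA1o : ∀ x ∈ A1, x ∉ S1)
    (hB1 : ∀ x ∈ B1, ∀ y ∈ B1, x ≠ y → Gs.Adj x y) (hB1o : ∀ x ∈ B1, x ∉ S1)
    (hA2 : ∀ x ∈ A2, ∀ y ∈ A2, x ≠ y → Gs.Adj x y) (hA2o : ∀ x ∈ A2, x ∉ S1)
    (hB2 : ∀ x ∈ B2, ∀ y ∈ B2, x ≠ y → Gs.Adj x y) (hB2o : ∀ x ∈ B2, x ∉ S1)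
    (hcA1 : A1.card = a) (hcB1 : B1.card = b) (hcA2 : A2.card = a) (hcB2 : B2.card = b)
    (hd1 : Disjoint A1 B1) (hd2 : Disjoint A2 B2)
    (hk : (B1 ∩ B2).card ≤ b - 2) :
    (a + 1).choose 2 + (b + 1).choose 2 ≤ (Gs.induce S1ᶜ).edgeSet.ncard := by
  have hfin := finish4 Gs S1 A1 B1 A2 B2 hA1 hA1o hB1 hB1o hA2 hA2o hB2 hB2o
  rw [card_inter_zero A1 B1 hd1, card_inter_zero A2 B2 hd2] at hfin
  have hT : (A1 ∩ B2).card ≤ a := le_trans (Finset.card_le_card Finset.inter_subset_left)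
    (le_of_eq hcA1)
  have hKT : (B1 ∩ B2).card + (A1 ∩ B2).card ≤ b := by
    have := pairbound B2 B1 A1 hd1.symm
    rw [Finset.inter_comm B2 B1, Finset.inter_comm B2 A1] at this
    omega
  have hSR : (B1 ∩ A2).card + (A1 ∩ A2).card ≤ a := by
    have := pairbound A2 B1 A1 hd1.symm
    rw [Finset.inter_comm A2 B1, Finset.inter_comm A2 A1] at this
    omega
  have hmaj : (B1 ∩ B2).card.choose 2 + (A1 ∩ B2).card.choose 2 ≤
      (b - 2).choose 2 + (2:ℕ).choose 2 :=
    choose2_major hk (by omega) (by omega)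
  have hsup : (B1 ∩ A2).card.choose 2 + (A1 ∩ A2).card.choose 2 ≤ a.choose 2 :=
    le_trans (csuper _ _) (Nat.choose_le_choose 2 (by omega))
  obtain ⟨b', rfl⟩ : ∃ b', b = b' + 2 := ⟨b - 2, by omega⟩
  simp only [Nat.add_sub_cancel] at hmaj
  have c2 : (2:ℕ).choose 2 = 1 := rfl
  have e1 := cstep b'
  have e2 := cstep (b' + 1)
  have e3 := cstep (b' + 2)
  have e4 := cstep a
  have c0 : (0:ℕ).choose 2 = 0 := rfl
  simp only [show b' + 1 + 1 = b' + 2 by omega] at e2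
  rw [hcA1, hcB1, hcA2, hcB2] at hfin
  omega

lemma leafAlpha1 (a b : ℕ) (ha : 4 ≤ a) (hab : a + 4 ≤ b)
    (X0 A B : Finset V)
    (hX0 : ∀ x ∈ X0, ∀ y ∈ X0, x ≠ y → Gs.Adj x y) (hX0o : ∀ x ∈ X0, x ∉ S1)
    (hA : ∀ x ∈ A, ∀ y ∈ A, x ≠ y → Gs.Adj x y) (hAo : ∀ x ∈ A, x ∉ S1)
    (hB : ∀ x ∈ B, ∀ y ∈ B, x ≠ y → Gs.Adj x y) (hBo : ∀ x ∈ B, x ∉ S1)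
    (hcX0 : X0.card = b + 1) (hcA : A.card = a) (hcB : B.card = b)
    (hd : Disjoint A B)
    (hk : (B ∩ X0).card ≤ b - 1) :
    (a + 1).choose 2 + (b + 1).choose 2 ≤ (Gs.induce S1ᶜ).edgeSet.ncard := by
  have hfin := finish4 Gs S1 X0 A B ∅ hX0 hX0o hA hAo hB hBo
    (by intro x hx; exact absurd hx (Finset.notMem_empty x))
    (by intro x hx; exact absurd hx (Finset.notMem_empty x))
  simp only [Finset.inter_empty, Finset.card_empty] at hfin
  rw [card_inter_zero A B hd] at hfin
  have hM : (X0 ∩ A).card ≤ a := le_trans (Finset.card_le_card Finset.inter_subset_right)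
    (le_of_eq hcA)
  have hMK : (X0 ∩ A).card + (X0 ∩ B).card ≤ b + 1 := by
    have := pairbound X0 A B hd; omega
  have hKcomm : (X0 ∩ B).card = (B ∩ X0).card := by rw [Finset.inter_comm]
  have hmaj : (X0 ∩ A).card.choose 2 + (X0 ∩ B).card.choose 2 ≤
      (b - 1).choose 2 + (2:ℕ).choose 2 :=
    choose2_major (by omega) (by omega) (by omega)
  obtain ⟨b', rfl⟩ : ∃ b', b = b' + 1 := ⟨b - 1, by omega⟩
  simp only [Nat.add_sub_cancel] at hmaj
  have c2 : (2:ℕ).choose 2 = 1 := rfl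
  have c0 : (0:ℕ).choose 2 = 0 := rfl
  have e1 := cstep b'
  have e2 := cstep (b' + 1)
  have e3 := cstep a
  rw [hcX0, hcA, hcB] at hfin
  omega

lemma leafTwoA (a b : ℕ) (ha : 4 ≤ a) (hab : a + 4 ≤ b)
    (X0 A A' : Finset V)
    (hX0 : ∀ x ∈ X0, ∀ y ∈ X0, x ≠ y → Gs.Adj x y) (hX0o : ∀ x ∈ X0, x ∉ S1)
    (hA : ∀ x ∈ A, ∀ y ∈ A, x ≠ y → Gs.Adj x y) (hAo : ∀ x ∈ A, x ∉ S1)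
    (hA' : ∀ x ∈ A', ∀ y ∈ A', x ≠ y → Gs.Adj x y) (hA'o : ∀ x ∈ A', x ∉ S1)
    (hcX0 : X0.card = b + 1) (hcA : A.card = a) (hcA' : A'.card = a)
    (hm : (A ∩ X0).card ≤ 1) (hm' : (A' ∩ X0).card ≤ 1)
    (hr : (A ∩ A').card ≤ a - 2) :
    (a + 1).choose 2 + (b + 1).choose 2 ≤ (Gs.induce S1ᶜ).edgeSet.ncard := by
  have hfin := finish4 Gs S1 X0 A A' ∅ hX0 hX0o hA hAo hA' hA'o
    (by intro x hx; exact absurd hx (Finset.notMem_empty x))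
    (by intro x hx; exact absurd hx (Finset.notMem_empty x))
  simp only [Finset.inter_empty, Finset.card_empty] at hfin
  have hz1 : (X0 ∩ A).card.choose 2 = 0 := by
    have : (X0 ∩ A).card ≤ 1 := by rw [Finset.inter_comm]; exact hm
    interval_cases h : (X0 ∩ A).card <;> rfl
  have hz2 : (X0 ∩ A').card.choose 2 = 0 := by
    have : (X0 ∩ A').card ≤ 1 := by rw [Finset.inter_comm]; exact hm'
    interval_cases h : (X0 ∩ A').card <;> rfl
  have hrr : (A ∩ A').card.choose 2 ≤ (a - 2).choose 2 := Nat.choose_le_choose 2 hr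
  obtain ⟨a'', rfl⟩ : ∃ a'', a = a'' + 2 := ⟨a - 2, by omega⟩
  simp only [Nat.add_sub_cancel] at hrr
  have c0 : (0:ℕ).choose 2 = 0 := rfl
  have e1 := cstep a''
  have e2 := cstep (a'' + 1)
  have e3 := cstep (a'' + 2)
  have e4 := cstep b
  simp only [show a'' + 1 + 1 = a'' + 2 by omega] at e2
  rw [hcX0, hcA, hcA'] at hfin
  omega

lemma leafBigA (a b : ℕ) (ha : 4 ≤ a) (hab : a + 4 ≤ b)
    (X0 Y : Finset V)
    (hX0 : ∀ x ∈ X0, ∀ y ∈ X0, x ≠ y → Gs.Adj x y) (hX0o : ∀ x ∈ X0, x ∉ S1)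
    (hY : ∀ x ∈ Y, ∀ y ∈ Y, x ≠ y → Gs.Adj x y) (hYo : ∀ x ∈ Y, x ∉ S1)
    (hcX0 : X0.card = b + 1) (hcY : Y.card = a + 1)
    (hm : (X0 ∩ Y).card ≤ 1) :
    (a + 1).choose 2 + (b + 1).choose 2 ≤ (Gs.induce S1ᶜ).edgeSet.ncard := by
  have hfin := finish4 Gs S1 X0 Y ∅ ∅ hX0 hX0o hY hYo
    (by intro x hx; exact absurd hx (Finset.notMem_empty x))
    (by intro x hx; exact absurd hx (Finset.notMem_empty x))
    (by intro x hx; exact absurd hx (Finset.notMem_empty x))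
    (by intro x hx; exact absurd hx (Finset.notMem_empty x))
  simp only [Finset.inter_empty, Finset.card_empty] at hfin
  have hz1 : (X0 ∩ Y).card.choose 2 = 0 := by
    interval_cases h : (X0 ∩ Y).card <;> rfl
  have c0 : (0:ℕ).choose 2 = 0 := rfl
  rw [hcX0, hcY] at hfin
  omega

end Leaves

def pfun (p1 p2 p3 : ℕ) : ℕ → ℕ := fun i => if i = 1 then p1 else if i = 2 then p2 else p3

lemma extract_pair {V : Type*} [Fintype V] [DecidableEq V] (p1 p2 p3 : ℕ)
    (hp1 : 4 ≤ p1) (hp12 : p1 ≤ p2) (hp23 : p2 + p1 ≤ p3)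
    (Gs : SimpleGraph V) (S1 : Set V) (hS1card : S1.ncard = p1 - 2)
    (v : V) (hvS1 : v ∉ S1) (hNv : Gs.neighborSet v = S1)
    (hfree : ¬ IsSubgraphOf (cliqueUnion 3 (pfun p1 p2 p3)) Gs)
    (w : V) (hw : w ∉ S1) (hwv : w ≠ v)
    (hsat : IsSubgraphOf (cliqueUnion 3 (pfun p1 p2 p3))
      (Gs ⊔ SimpleGraph.fromEdgeSet {s(v, w)})) :
    ∃ A B : Finset V,
      (∀ x ∈ A, ∀ y ∈ A, x ≠ y → Gs.Adj x y) ∧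
      (∀ x ∈ B, ∀ y ∈ B, x ≠ y → Gs.Adj x y) ∧
      A.card = p2 ∧ B.card = p3 ∧ Disjoint A B ∧
      (∀ x ∈ A ∪ B, x ∉ S1 ∧ x ≠ v ∧ x ≠ w) := by
  classical
  obtain ⟨f, hinj, hhom⟩ := hsat
  have hG'adj : ∀ x y : V, (Gs ⊔ SimpleGraph.fromEdgeSet {s(v, w)}).Adj x y ↔
      (Gs.Adj x y ∨ ((x = v ∧ y = w) ∨ (x = w ∧ y = v))) := by
    intro x y
    simp only [SimpleGraph.sup_adj, SimpleGraph.fromEdgeSet_adj, Set.mem_singleton_iff,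
      Sym2.eq_iff]
    constructor
    · rintro (h | ⟨(⟨rfl, rfl⟩ | ⟨rfl, rfl⟩), hne⟩)
      · exact Or.inl h
      · exact Or.inr (Or.inl ⟨rfl, rfl⟩)
      · exact Or.inr (Or.inr ⟨rfl, rfl⟩)
    · rintro (h | (⟨rfl, rfl⟩ | ⟨rfl, rfl⟩))
      · exact Or.inl h
      · exact Or.inr ⟨Or.inl ⟨rfl, rfl⟩, Ne.symm hwv⟩
      · exact Or.inr ⟨Or.inr ⟨rfl, rfl⟩, hwv⟩
  -- blocks
  let Blk : Fin 3 → Finset V := fun i =>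
    Finset.univ.image (fun x : Fin (pfun p1 p2 p3 ((i : ℕ) + 1)) => f ⟨i, x⟩)
  have hBlkmem : ∀ (i : Fin 3) (t : V), t ∈ Blk i ↔
      ∃ x : Fin (pfun p1 p2 p3 ((i : ℕ) + 1)), f ⟨i, x⟩ = t := by
    intro i t
    simp [Blk]
  have hBlkcard : ∀ i : Fin 3, (Blk i).card = pfun p1 p2 p3 ((i : ℕ) + 1) := by
    intro i
    rw [Finset.card_image_of_injective _ (fun x y h => by
      have := hinj h; simpa using this)]
    simp
  have hBlkclique : ∀ i : Fin 3, ∀ x ∈ Blk i, ∀ y ∈ Blk i, x ≠ y →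
      (Gs ⊔ SimpleGraph.fromEdgeSet {s(v, w)}).Adj x y := by
    intro i x hx y hy hxy
    obtain ⟨p, rfl⟩ := (hBlkmem i x).mp hx
    obtain ⟨q, rfl⟩ := (hBlkmem i y).mp hy
    exact hhom _ _ ⟨fun hc => hxy (by rw [hc]), rfl⟩
  have hBlkdisj : ∀ i i' : Fin 3, i ≠ i' → Disjoint (Blk i) (Blk i') := by
    intro i i' hne
    rw [Finset.disjoint_left]
    intro t ht ht'
    obtain ⟨p, hp⟩ := (hBlkmem i t).mp ht
    obtain ⟨q, hq⟩ := (hBlkmem i' t).mp ht'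
    exact hne (congrArg Sigma.fst (hinj (hp.trans hq.symm)))
  -- the new edge is used
  by_cases hcase : ∃ α β : (Σ i : Fin 3, Fin (pfun p1 p2 p3 ((i : ℕ) + 1))),
      α.1 = β.1 ∧ f α = v ∧ f β = w
  swap
  · exfalso
    apply hfree
    refine ⟨f, hinj, fun α β hadj => ?_⟩
    have h := hhom α β hadj
    rw [hG'adj] at h
    rcases h with h | (⟨h1, h2⟩ | ⟨h1, h2⟩)
    · exact h
    · exact absurd ⟨α, β, hadj.2, h1, h2⟩ hcase
    · exact absurd ⟨β, α, hadj.2.symm, h2, h1⟩ hcase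
  obtain ⟨⟨j, x0⟩, ⟨j2, y0⟩, hj, hfv, hfw⟩ := hcase
  change j = j2 at hj
  subst hj
  have hvmem : v ∈ Blk j := (hBlkmem j v).mpr ⟨x0, hfv⟩
  have hwmem : w ∈ Blk j := (hBlkmem j w).mpr ⟨y0, hfw⟩
  -- Blk j ⊆ S1 ∪ {v, w}
  have hS1fin : S1.Finite := S1.toFinite
  set S1fin : Finset V := hS1fin.toFinset with hS1fin_def
  have hS1mem : ∀ x : V, x ∈ S1fin ↔ x ∈ S1 := fun x => Set.Finite.mem_toFinset _
  have hS1fincard : S1fin.card = p1 - 2 := by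
    rw [← Set.ncard_eq_toFinset_card S1 hS1fin] at *; exact hS1card
  have hsub : Blk j ⊆ S1fin ∪ {v, w} := by
    intro t ht
    obtain ⟨x, rfl⟩ := (hBlkmem j t).mp ht
    by_cases hx : f ⟨j, x⟩ = v
    · simp [hx]
    · have hne : (⟨j, x⟩ : Σ i : Fin 3, Fin (pfun p1 p2 p3 ((i : ℕ) + 1))) ≠ ⟨j, x0⟩ := by
        intro hc; exact hx (by rw [hc]; exact hfv)
      have h := hhom _ _ (⟨hne, rfl⟩ :
        (cliqueUnion 3 (pfun p1 p2 p3)).Adj ⟨j, x⟩ ⟨j, x0⟩)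
      rw [hfv, hG'adj] at h
      rcases h with h | (⟨h1, h2⟩ | ⟨h1, h2⟩)
      · have : f ⟨j, x⟩ ∈ Gs.neighborSet v := h.symm
        rw [hNv] at this
        simp [hS1mem, this]
      · exact absurd h1 hx
      · simp [h1]
  have hcardsub : (S1fin ∪ {v, w}).card ≤ p1 := by
    have h1 := Finset.card_union_le S1fin ({v, w} : Finset V)
    have h2 : ({v, w} : Finset V).card ≤ 2 := le_trans (Finset.card_insert_le _ _) (by simp)
    omega
  have hge : ∀ i : Fin 3, p1 ≤ pfun p1 p2 p3 ((i : ℕ) + 1) := by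
    intro i
    fin_cases i <;> simp [pfun] <;> omega
  have hJeq : Blk j = S1fin ∪ {v, w} := by
    apply Finset.eq_of_subset_of_card_le hsub
    rw [hBlkcard j]
    exact le_trans hcardsub (hge j)
  have hjle : pfun p1 p2 p3 ((j : ℕ) + 1) ≤ p1 := by
    rw [← hBlkcard j, hJeq]; exact hcardsub
  -- generic builder
  have build : ∀ jA jB : Fin 3, jA ≠ j → jB ≠ j → jA ≠ jB →
      (Blk jA).card = p2 → (Blk jB).card = p3 →
      ∃ A B : Finset V,
        (∀ x ∈ A, ∀ y ∈ A, x ≠ y → Gs.Adj x y) ∧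
        (∀ x ∈ B, ∀ y ∈ B, x ≠ y → Gs.Adj x y) ∧
        A.card = p2 ∧ B.card = p3 ∧ Disjoint A B ∧
        (∀ x ∈ A ∪ B, x ∉ S1 ∧ x ≠ v ∧ x ≠ w) := by
    intro jA jB hjA hjB hAB hcA hcB
    have houts : ∀ i : Fin 3, i ≠ j → ∀ x ∈ Blk i, x ∉ S1 ∧ x ≠ v ∧ x ≠ w := by
      intro i hi x hx
      have hnot : x ∉ Blk j := Finset.disjoint_left.mp (hBlkdisj i j hi) hx
      rw [hJeq] at hnot
      simp only [Finset.mem_union, Finset.mem_insert, Finset.mem_singleton, not_or] at hnot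
      exact ⟨fun hs => hnot.1 ((hS1mem x).mpr hs), hnot.2⟩
    have hclq : ∀ i : Fin 3, i ≠ j → ∀ x ∈ Blk i, ∀ y ∈ Blk i, x ≠ y → Gs.Adj x y := by
      intro i hi x hx y hy hxy
      have h := hBlkclique i x hx y hy hxy
      rw [hG'adj] at h
      rcases h with h | (⟨h1, h2⟩ | ⟨h1, h2⟩)
      · exact h
      · exact absurd h1 (houts i hi x hx).2.1
      · exact absurd h1 (houts i hi x hx).2.2
    exact ⟨Blk jA, Blk jB, hclq jA hjA, hclq jB hjB, hcA, hcB, hBlkdisj jA jB hAB,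
      fun x hx => by
        rcases Finset.mem_union.mp hx with h | h
        · exact houts jA hjA x h
        · exact houts jB hjB x h⟩
  fin_cases j
  · refine build 1 2 (by decide) (by decide) (by decide) ?_ ?_
    · rw [hBlkcard]; simp [pfun]
    · rw [hBlkcard]; simp [pfun]
  · have : p2 ≤ p1 := by simpa [pfun] using hjle
    refine build 0 2 (by decide) (by decide) (by decide) ?_ ?_
    · rw [hBlkcard]; simp [pfun]; omega
    · rw [hBlkcard]; simp [pfun]
  · have : p3 ≤ p1 := by simpa [pfun] using hjle
    omega

end AuxClaim

/-- Claim 2: the three-clique analogue; the edges outside `V(H₁)` number at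
least `C(p₂+1, 2) + C(p₃+1, 2)`. -/
theorem claim_three_cliques {V : Type*} [Fintype V] (p1 p2 p3 : ℕ)
    (hp1 : 4 ≤ p1) (hp12 : p1 ≤ p2) (hgap : p1 ≤ p3 - p2)
    (Gs : SimpleGraph V) (S1 B2 B3 : Set V)
    (hS1card : S1.ncard = p1 - 2) (hB2card : B2.ncard = p2) (hB3card : B3.ncard = p3)
    (hd12 : Disjoint S1 B2) (hd13 : Disjoint S1 B3) (hd23 : Disjoint B2 B3)
    (hS1clique : ∀ a ∈ S1, ∀ b ∈ S1, a ≠ b → Gs.Adj a b)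
    (hB2clique : ∀ a ∈ B2, ∀ b ∈ B2, a ≠ b → Gs.Adj a b)
    (hB3clique : ∀ a ∈ B3, ∀ b ∈ B3, a ≠ b → Gs.Adj a b)
    (hjoin : ∀ a ∈ S1, ∀ b, b ∉ S1 → Gs.Adj a b)
    (hfree : ¬ IsSubgraphOf
      (cliqueUnion 3 (fun i => if i = 1 then p1 else if i = 2 then p2 else p3)) Gs)
    (v : V) (hv : v ∉ S1 ∪ B2 ∪ B3) (hNv : Gs.neighborSet v = S1)
    (hsatur : ∀ w', w' ∉ S1 → w' ≠ v →
      IsSubgraphOf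
        (cliqueUnion 3 (fun i => if i = 1 then p1 else if i = 2 then p2 else p3))
        (Gs ⊔ SimpleGraph.fromEdgeSet {s(v, w')})) :
    (p2 + 1).choose 2 + (p3 + 1).choose 2 ≤ (Gs.induce S1ᶜ).edgeSet.ncard := by
  classical
  have hA : 4 ≤ p2 := le_trans hp1 hp12
  have hab : p2 + 4 ≤ p3 := by omega
  simp only [Set.mem_union, not_or] at hv
  obtain ⟨⟨hvS1, hvB2⟩, hvB3⟩ := hv
  have hfree' : ¬ IsSubgraphOf (cliqueUnion 3 (pfun p1 p2 p3)) Gs := hfree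
  have P : ∀ w : V, w ∉ S1 → w ≠ v → ∃ A B : Finset V,
      (∀ x ∈ A, ∀ y ∈ A, x ≠ y → Gs.Adj x y) ∧
      (∀ x ∈ B, ∀ y ∈ B, x ≠ y → Gs.Adj x y) ∧
      A.card = p2 ∧ B.card = p3 ∧ Disjoint A B ∧
      (∀ x ∈ A ∪ B, x ∉ S1 ∧ x ≠ v ∧ x ≠ w) := by
    intro w hw hwv
    exact extract_pair p1 p2 p3 hp1 hp12 (by omega) Gs S1 hS1card v hvS1 hNv hfree'
      w hw hwv (hsatur w hw hwv)
  -- starting vertex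
  obtain ⟨w0, hw0B⟩ : B2.Nonempty := Set.nonempty_of_ncard_ne_zero (by rw [hB2card]; omega)
  have hw0S1 : w0 ∉ S1 := fun h => Set.disjoint_left.mp hd12 h hw0B
  have hw0v : w0 ≠ v := fun h => hvB2 (h ▸ hw0B)
  obtain ⟨A1, B1, hA1c, hB1c, hA1card, hB1card, hdis1, hout1⟩ := P w0 hw0S1 hw0v
  have hA1o : ∀ x ∈ A1, x ∉ S1 := fun x hx => (hout1 x (Finset.mem_union_left _ hx)).1
  have hB1o : ∀ x ∈ B1, x ∉ S1 := fun x hx => (hout1 x (Finset.mem_union_right _ hx)).1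
  obtain ⟨u1, hu1B1⟩ : B1.Nonempty := Finset.card_pos.mp (by rw [hB1card]; omega)
  have hu1o := hout1 u1 (Finset.mem_union_right _ hu1B1)
  obtain ⟨A2, B2', hA2c, hB2'c, hA2card, hB2'card, hdis2, hout2⟩ := P u1 hu1o.1 hu1o.2.1
  have hA2o : ∀ x ∈ A2, x ∉ S1 := fun x hx => (hout2 x (Finset.mem_union_left _ hx)).1
  have hB2'o : ∀ x ∈ B2', x ∉ S1 := fun x hx => (hout2 x (Finset.mem_union_right _ hx)).1
  have hu1nB2' : u1 ∉ B2' := fun h => (hout2 u1 (Finset.mem_union_right _ h)).2.2 rfl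
  have hu1nA2 : u1 ∉ A2 := fun h => (hout2 u1 (Finset.mem_union_left _ h)).2.2 rfl
  have hsubBB : B1 ∩ B2' ⊆ B1.erase u1 := by
    intro z hz
    have hz' := Finset.mem_inter.mp hz
    exact Finset.mem_erase.mpr ⟨fun hc => hu1nB2' (hc ▸ hz'.2), hz'.1⟩
  have hk1le : (B1 ∩ B2').card ≤ p3 - 1 := by
    have := Finset.card_le_card hsubBB
    rw [Finset.card_erase_of_mem hu1B1, hB1card] at this
    exact this
  by_cases hk1 : (B1 ∩ B2').card ≤ p3 - 2
  · exact leafBeta Gs S1 p2 p3 hA hab A1 B1 A2 B2' hA1c hA1o hB1c hB1o hA2c hA2o hB2'c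
      hB2'o hA1card hB1card hA2card hB2'card hdis1 hdis2 hk1
  have hBB : B1 ∩ B2' = B1.erase u1 := by
    apply Finset.eq_of_subset_of_card_le hsubBB
    rw [Finset.card_erase_of_mem hu1B1, hB1card]
    omega
  have hB1sub : B1.erase u1 ⊆ B2' := by
    rw [← hBB]; exact Finset.inter_subset_right
  have hxcard : (B2' \ B1).card = 1 := by
    have h := Finset.card_inter_add_card_sdiff B2' B1
    rw [Finset.inter_comm, hBB, Finset.card_erase_of_mem hu1B1, hB1card, hB2'card] at h
    omega
  obtain ⟨x, hxeq⟩ := Finset.card_eq_one.mp hxcard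
  have hxmem : x ∈ B2' \ B1 := by rw [hxeq]; exact Finset.mem_singleton_self x
  have hxB2' : x ∈ B2' := (Finset.mem_sdiff.mp hxmem).1
  have hxnB1 : x ∉ B1 := (Finset.mem_sdiff.mp hxmem).2
  have hxo := hout2 x (Finset.mem_union_right _ hxB2')
  have hxu1 : x ≠ u1 := fun h => hxnB1 (h ▸ hu1B1)
  by_cases hadj : Gs.Adj u1 x
  · -- build the (p3+1)-clique X0
    set X0 : Finset V := insert x B1 with hX0def
    have hX0card : X0.card = p3 + 1 := by
      rw [hX0def, Finset.card_insert_of_notMem hxnB1, hB1card]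
    have hxB1adj : ∀ t ∈ B1, t ≠ x → Gs.Adj x t := by
      intro t ht htx
      by_cases htu : t = u1
      · subst htu; exact hadj.symm
      · exact hB2'c x hxB2' t (hB1sub (Finset.mem_erase.mpr ⟨htu, ht⟩)) (Ne.symm htx)
    have hX0c : ∀ s ∈ X0, ∀ y ∈ X0, s ≠ y → Gs.Adj s y := by
      intro s hs y hy hsy
      rcases Finset.mem_insert.mp hs with rfl | hsB1
      · rcases Finset.mem_insert.mp hy with rfl | hyB1
        · exact absurd rfl hsy
        · exact hxB1adj y hyB1 (Ne.symm hsy)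
      · rcases Finset.mem_insert.mp hy with rfl | hyB1
        · exact (hxB1adj s hsB1 hsy).symm
        · exact hB1c s hsB1 y hyB1 hsy
    have hX0o : ∀ t ∈ X0, t ∉ S1 := by
      intro t ht
      rcases Finset.mem_insert.mp ht with rfl | htB1
      · exact hxo.1
      · exact hB1o t htB1
    have hu1X0 : u1 ∈ X0 := Finset.mem_insert_of_mem hu1B1
    -- A2 / B2' versus X0
    have hmk : (A2 ∩ X0).card + (B2' ∩ X0).card ≤ p3 := by
      have hdisj : Disjoint (A2 ∩ X0) (B2' ∩ X0) :=
        hdis2.mono Finset.inter_subset_left Finset.inter_subset_left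
      have hsub : (A2 ∩ X0) ∪ (B2' ∩ X0) ⊆ X0.erase u1 := by
        intro z hz
        rcases Finset.mem_union.mp hz with hz' | hz'
        · have h := Finset.mem_inter.mp hz'
          exact Finset.mem_erase.mpr ⟨fun hc => hu1nA2 (hc ▸ h.1), h.2⟩
        · have h := Finset.mem_inter.mp hz'
          exact Finset.mem_erase.mpr ⟨fun hc => hu1nB2' (hc ▸ h.1), h.2⟩
      have := Finset.card_le_card hsub
      rw [Finset.card_union_of_disjoint hdisj, Finset.card_erase_of_mem hu1X0,
        hX0card] at this
      omega
  -- case on whether B2' sits inside X0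
    by_cases hkX : (B2' ∩ X0).card ≤ p3 - 1
    · exact leafAlpha1 Gs S1 p2 p3 hA hab X0 A2 B2' hX0c hX0o hA2c hA2o hB2'c hB2'o
        hX0card hA2card hB2'card hdis2 hkX
    · have hA2X0 : (A2 ∩ X0).card = 0 := by
        have : (B2' ∩ X0).card ≤ p3 := by
          have := Finset.card_le_card (Finset.inter_subset_left (s₁ := B2') (s₂ := X0))
          omega
        omega
      have hA2X0' : ∀ z ∈ A2, z ∉ X0 := by
        intro z hz hzX
        have hmem : z ∈ A2 ∩ X0 := Finset.mem_inter.mpr ⟨hz, hzX⟩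
        rw [Finset.card_eq_zero.mp hA2X0] at hmem
        exact absurd hmem (Finset.notMem_empty z)
      obtain ⟨z1, hz1A2⟩ : A2.Nonempty := Finset.card_pos.mp (by rw [hA2card]; omega)
      have hz1o := hout2 z1 (Finset.mem_union_left _ hz1A2)
      obtain ⟨A4, B4, hA4c, hB4c, hA4card, hB4card, hdis4, hout4⟩ := P z1 hz1o.1 hz1o.2.1
      have hA4o : ∀ t ∈ A4, t ∉ S1 := fun t ht => (hout4 t (Finset.mem_union_left _ ht)).1
      have hB4o : ∀ t ∈ B4, t ∉ S1 := fun t ht => (hout4 t (Finset.mem_union_right _ ht)).1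
      by_cases hk4 : (B4 ∩ X0).card ≤ p3 - 1
      · exact leafAlpha1 Gs S1 p2 p3 hA hab X0 A4 B4 hX0c hX0o hA4c hA4o hB4c hB4o
          hX0card hA4card hB4card hdis4 hk4
      · have hm4 : (A4 ∩ X0).card ≤ 1 := by
          have hpb := pairbound X0 A4 B4 hdis4
          rw [Finset.inter_comm X0 A4, Finset.inter_comm X0 B4, hX0card] at hpb
          have : (B4 ∩ X0).card ≤ p3 := by
            have := Finset.card_le_card (Finset.inter_subset_left (s₁ := B4) (s₂ := X0))
            omega
          omega
        have hz1nA4 : z1 ∉ A4 := fun h => (hout4 z1 (Finset.mem_union_left _ h)).2.2 rfl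
        have hsubAA : A2 ∩ A4 ⊆ A2.erase z1 := by
          intro t ht
          have h := Finset.mem_inter.mp ht
          exact Finset.mem_erase.mpr ⟨fun hc => hz1nA4 (hc ▸ h.2), h.1⟩
        by_cases hr4 : (A2 ∩ A4).card ≤ p2 - 2
        · exact leafTwoA Gs S1 p2 p3 hA hab X0 A2 A4 hX0c hX0o hA2c hA2o hA4c hA4o
            hX0card hA2card hA4card (by omega) hm4 hr4
        · have hr4le : (A2 ∩ A4).card ≤ p2 - 1 := by
            have := Finset.card_le_card hsubAA
            rw [Finset.card_erase_of_mem hz1A2, hA2card] at this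
            exact this
          have hAA : A2 ∩ A4 = A2.erase z1 := by
            apply Finset.eq_of_subset_of_card_le hsubAA
            rw [Finset.card_erase_of_mem hz1A2, hA2card]
            omega
          have hA2sub : A2.erase z1 ⊆ A4 := by
            rw [← hAA]; exact Finset.inter_subset_right
          have hx'card : (A4 \ A2).card = 1 := by
            have h := Finset.card_inter_add_card_sdiff A4 A2
            rw [Finset.inter_comm, hAA, Finset.card_erase_of_mem hz1A2, hA2card,
              hA4card] at h
            omega
          obtain ⟨x', hx'eq⟩ := Finset.card_eq_one.mp hx'card
          have hx'mem : x' ∈ A4 \ A2 := by rw [hx'eq]; exact Finset.mem_singleton_self x'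
          have hx'A4 : x' ∈ A4 := (Finset.mem_sdiff.mp hx'mem).1
          have hx'nA2 : x' ∉ A2 := (Finset.mem_sdiff.mp hx'mem).2
          have hx'o := hout4 x' (Finset.mem_union_left _ hx'A4)
          have hx'z1 : x' ≠ z1 := fun h => hx'nA2 (h ▸ hz1A2)
          by_cases hadjz : Gs.Adj z1 x'
          · -- (p2+1)-clique Y
            set Y : Finset V := insert x' A2 with hYdef
            have hYcard : Y.card = p2 + 1 := by
              rw [hYdef, Finset.card_insert_of_notMem hx'nA2, hA2card]
            have hx'A2adj : ∀ t ∈ A2, t ≠ x' → Gs.Adj x' t := by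
              intro t ht htx
              by_cases htz : t = z1
              · subst htz; exact hadjz.symm
              · exact hA4c x' hx'A4 t (hA2sub (Finset.mem_erase.mpr ⟨htz, ht⟩))
                  (Ne.symm htx)
            have hYc : ∀ s ∈ Y, ∀ y ∈ Y, s ≠ y → Gs.Adj s y := by
              intro s hs y hy hsy
              rcases Finset.mem_insert.mp hs with rfl | hsA2
              · rcases Finset.mem_insert.mp hy with rfl | hyA2
                · exact absurd rfl hsy
                · exact hx'A2adj y hyA2 (Ne.symm hsy)
              · rcases Finset.mem_insert.mp hy with rfl | hyA2
                · exact (hx'A2adj s hsA2 hsy).symm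
                · exact hA2c s hsA2 y hyA2 hsy
            have hYo : ∀ t ∈ Y, t ∉ S1 := by
              intro t ht
              rcases Finset.mem_insert.mp ht with rfl | htA2
              · exact hx'o.1
              · exact hA2o t htA2
            have hYX0 : (X0 ∩ Y).card ≤ 1 := by
              have hsub : X0 ∩ Y ⊆ {x'} := by
                intro t ht
                have h := Finset.mem_inter.mp ht
                rcases Finset.mem_insert.mp h.2 with rfl | htA2
                · exact Finset.mem_singleton_self t
                · exact absurd h.1 (hA2X0' t htA2)
              have := Finset.card_le_card hsub
              simpa using this
            exact leafBigA Gs S1 p2 p3 hA hab X0 Y hX0c hX0o hYc hYo hX0card hYcard hYX0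
          · -- second chain step
            obtain ⟨z2, hz2⟩ : (A2.erase z1).Nonempty := Finset.card_pos.mp (by
              rw [Finset.card_erase_of_mem hz1A2, hA2card]; omega)
            have hz2A2 : z2 ∈ A2 := Finset.mem_of_mem_erase hz2
            have hz2ne : z2 ≠ z1 := (Finset.mem_erase.mp hz2).1
            have hz2o := hout2 z2 (Finset.mem_union_left _ hz2A2)
            obtain ⟨A5, B5, hA5c, hB5c, hA5card, hB5card, hdis5, hout5⟩ :=
              P z2 hz2o.1 hz2o.2.1
            have hA5o : ∀ t ∈ A5, t ∉ S1 :=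
              fun t ht => (hout5 t (Finset.mem_union_left _ ht)).1
            have hB5o : ∀ t ∈ B5, t ∉ S1 :=
              fun t ht => (hout5 t (Finset.mem_union_right _ ht)).1
            by_cases hk5 : (B5 ∩ X0).card ≤ p3 - 1
            · exact leafAlpha1 Gs S1 p2 p3 hA hab X0 A5 B5 hX0c hX0o hA5c hA5o hB5c hB5o
                hX0card hA5card hB5card hdis5 hk5
            · have hm5 : (A5 ∩ X0).card ≤ 1 := by
                have hpb := pairbound X0 A5 B5 hdis5
                rw [Finset.inter_comm X0 A5, Finset.inter_comm X0 B5, hX0card] at hpb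
                have : (B5 ∩ X0).card ≤ p3 := by
                  have := Finset.card_le_card (Finset.inter_subset_left (s₁ := B5) (s₂ := X0))
                  omega
                omega
              have hz2nA5 : z2 ∉ A5 :=
                fun h => (hout5 z2 (Finset.mem_union_left _ h)).2.2 rfl
              have hsubAA5 : A2 ∩ A5 ⊆ A2.erase z2 := by
                intro t ht
                have h := Finset.mem_inter.mp ht
                exact Finset.mem_erase.mpr ⟨fun hc => hz2nA5 (hc ▸ h.2), h.1⟩
              by_cases hr5 : (A2 ∩ A5).card ≤ p2 - 2
              · exact leafTwoA Gs S1 p2 p3 hA hab X0 A2 A5 hX0c hX0o hA2c hA2o hA5c hA5o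
                  hX0card hA2card hA5card (by omega) hm5 hr5
              · have hAA5 : A2 ∩ A5 = A2.erase z2 := by
                  apply Finset.eq_of_subset_of_card_le hsubAA5
                  rw [Finset.card_erase_of_mem hz2A2, hA2card]
                  have := Finset.card_le_card hsubAA5
                  rw [Finset.card_erase_of_mem hz2A2, hA2card] at this
                  omega
                have hA2sub5 : A2.erase z2 ⊆ A5 := by
                  rw [← hAA5]; exact Finset.inter_subset_right
                have hy'card : (A5 \ A2).card = 1 := by
                  have h := Finset.card_inter_add_card_sdiff A5 A2
                  rw [Finset.inter_comm, hAA5, Finset.card_erase_of_mem hz2A2, hA2card,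
                    hA5card] at h
                  omega
                obtain ⟨y', hy'eq⟩ := Finset.card_eq_one.mp hy'card
                have hy'mem : y' ∈ A5 \ A2 := by
                  rw [hy'eq]; exact Finset.mem_singleton_self y'
                have hy'A5 : y' ∈ A5 := (Finset.mem_sdiff.mp hy'mem).1
                have hy'nA2 : y' ∉ A2 := (Finset.mem_sdiff.mp hy'mem).2
                have hy'x' : y' ≠ x' := by
                  intro h
                  have hz1A5 : z1 ∈ A5 :=
                    hA2sub5 (Finset.mem_erase.mpr ⟨Ne.symm hz2ne, hz1A2⟩)
                  exact hadjz (hA5c z1 hz1A5 x' (h ▸ hy'A5) (Ne.symm hx'z1))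
                have hr45 : (A4 ∩ A5).card ≤ p2 - 2 := by
                  have hsub : A4 ∩ A5 ⊆ (A2.erase z1).erase z2 := by
                    intro t ht
                    have h := Finset.mem_inter.mp ht
                    have htA2 : t ∈ A2 := by
                      by_contra htn
                      have : t ∈ A5 \ A2 := Finset.mem_sdiff.mpr ⟨h.2, htn⟩
                      rw [hy'eq] at this
                      have hty : t = y' := Finset.mem_singleton.mp this
                      subst hty
                      have : t ∈ A4 \ A2 := Finset.mem_sdiff.mpr ⟨h.1, htn⟩
                      rw [hx'eq] at this
                      exact hy'x' (Finset.mem_singleton.mp this)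
                    refine Finset.mem_erase.mpr ⟨fun hc => hz2nA5 (hc ▸ h.2), ?_⟩
                    exact Finset.mem_erase.mpr ⟨fun hc => hz1nA4 (hc ▸ h.1), htA2⟩
                  have := Finset.card_le_card hsub
                  rw [Finset.card_erase_of_mem
                      (Finset.mem_erase.mpr ⟨hz2ne, hz2A2⟩),
                    Finset.card_erase_of_mem hz1A2, hA2card] at this
                  omega
                exact leafTwoA Gs S1 p2 p3 hA hab X0 A4 A5 hX0c hX0o hA4c hA4o hA5c hA5o
                  hX0card hA4card hA5card hm4 hm5 hr45
  · -- ¬ Gs.Adj u1 x : find contradiction or another β-pair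
    obtain ⟨z, hz⟩ : (B1.erase u1).Nonempty := Finset.card_pos.mp (by
      rw [Finset.card_erase_of_mem hu1B1, hB1card]; omega)
    have hzB1 : z ∈ B1 := Finset.mem_of_mem_erase hz
    have hzu1 : z ≠ u1 := (Finset.mem_erase.mp hz).1
    have hzo := hout1 z (Finset.mem_union_right _ hzB1)
    obtain ⟨A3, B3', hA3c, hB3'c, hA3card, hB3'card, hdis3, hout3⟩ := P z hzo.1 hzo.2.1
    have hA3o : ∀ t ∈ A3, t ∉ S1 := fun t ht => (hout3 t (Finset.mem_union_left _ ht)).1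
    have hB3'o : ∀ t ∈ B3', t ∉ S1 :=
      fun t ht => (hout3 t (Finset.mem_union_right _ ht)).1
    by_cases hk3 : (B1 ∩ B3').card ≤ p3 - 2
    · exact leafBeta Gs S1 p2 p3 hA hab A1 B1 A3 B3' hA1c hA1o hB1c hB1o hA3c hA3o hB3'c
        hB3'o hA1card hB1card hA3card hB3'card hdis1 hdis3 hk3
    by_cases hk23 : (B2' ∩ B3').card ≤ p3 - 2
    · exact leafBeta Gs S1 p2 p3 hA hab A2 B2' A3 B3' hA2c hA2o hB2'c hB2'o hA3c hA3o
        hB3'c hB3'o hA2card hB2'card hA3card hB3'card hdis2 hdis3 hk23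
    exfalso
    have hznB3' : z ∉ B3' := fun h => (hout3 z (Finset.mem_union_right _ h)).2.2 rfl
    have hsubB3 : B1 ∩ B3' ⊆ B1.erase z := by
      intro t ht
      have h := Finset.mem_inter.mp ht
      exact Finset.mem_erase.mpr ⟨fun hc => hznB3' (hc ▸ h.2), h.1⟩
    have hBB3 : B1 ∩ B3' = B1.erase z := by
      apply Finset.eq_of_subset_of_card_le hsubB3
      rw [Finset.card_erase_of_mem hzB1, hB1card]
      have := Finset.card_le_card hsubB3
      rw [Finset.card_erase_of_mem hzB1, hB1card] at this
      omega
    have hB1subz : B1.erase z ⊆ B3' := by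
      rw [← hBB3]; exact Finset.inter_subset_right
    have hycard : (B3' \ B1).card = 1 := by
      have h := Finset.card_inter_add_card_sdiff B3' B1
      rw [Finset.inter_comm, hBB3, Finset.card_erase_of_mem hzB1, hB1card,
        hB3'card] at h
      omega
    obtain ⟨y, hyeq⟩ := Finset.card_eq_one.mp hycard
    have hymem : y ∈ B3' \ B1 := by rw [hyeq]; exact Finset.mem_singleton_self y
    have hyB3' : y ∈ B3' := (Finset.mem_sdiff.mp hymem).1
    have hynB1 : y ∉ B1 := (Finset.mem_sdiff.mp hymem).2
    have hyB2' : y ∈ B2' := by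
      by_contra hy
      have hsub' : B2' ∩ B3' ⊆ (B1.erase u1).erase z := by
        intro t ht
        have h := Finset.mem_inter.mp ht
        have htB1 : t ∈ B1 := by
          by_contra htn
          have : t ∈ B3' \ B1 := Finset.mem_sdiff.mpr ⟨h.2, htn⟩
          rw [hyeq] at this
          exact hy ((Finset.mem_singleton.mp this) ▸ h.1)
        refine Finset.mem_erase.mpr ⟨fun hc => hznB3' (hc ▸ h.2), ?_⟩
        exact Finset.mem_erase.mpr ⟨fun hc => hu1nB2' (hc ▸ h.1), htB1⟩
      have := Finset.card_le_card hsub'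
      rw [Finset.card_erase_of_mem (Finset.mem_erase.mpr ⟨hzu1, hzB1⟩),
        Finset.card_erase_of_mem hu1B1, hB1card] at this
      omega
    have hyx : y = x := by
      have : y ∈ B2' \ B1 := Finset.mem_sdiff.mpr ⟨hyB2', hynB1⟩
      rw [hxeq] at this
      exact Finset.mem_singleton.mp this
    have hu1B3' : u1 ∈ B3' := hB1subz (Finset.mem_erase.mpr ⟨Ne.symm hzu1, hu1B1⟩)
    exact hadj (hB3'c u1 hu1B3' x (hyx ▸ hyB3') (Ne.symm hxu1))
end
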